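/- arXiv:1903.03089 — 5 statements merged into one kernel-verified Lean document; each statement's English description precedes it below -/
import Mathlib

section
/- In the three-level least squares setting with the given QR decompositions, the matrix A = BᵀB is invertible and the p×p sub-block A¹¹ of A⁻¹ satisfies A¹¹ = R⁻¹ R⁻ᵀ. -/
open Matrix

/-- The three-level least-squares design matrix: row block `(i,j)` (of height
`oᵢⱼ`, indexed by `Fin q₂ ⊕ Fin (k i j)` so that `oᵢⱼ = q₂ + k i j ≥ q₂`)
carries `Bᵢⱼ` against the first column block, `B̊ᵢⱼ` against the level-2 column
block of group `i`, `B̊̊ᵢⱼ` against the level-3 column block `(i,j)` and zeroes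
elsewhere. -/
def threeLevelB {p q₁ q₂ m : ℕ} {n : Fin m → ℕ} {k : (i : Fin m) → Fin (n i) → ℕ}
    (B1 : (i : Fin m) → (j : Fin (n i)) → Matrix (Fin q₂ ⊕ Fin (k i j)) (Fin p) ℝ)
    (B2 : (i : Fin m) → (j : Fin (n i)) → Matrix (Fin q₂ ⊕ Fin (k i j)) (Fin q₁) ℝ)
    (B3 : (i : Fin m) → (j : Fin (n i)) → Matrix (Fin q₂ ⊕ Fin (k i j)) (Fin q₂) ℝ) :
    Matrix ((i : Fin m) × ((j : Fin (n i)) × (Fin q₂ ⊕ Fin (k i j))))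
           (Fin p ⊕ (Σ i : Fin m, Fin q₁ ⊕ (Fin (n i) × Fin q₂))) ℝ :=
  Matrix.of fun x y =>
    match y with
    | Sum.inl a => B1 x.1 x.2.1 x.2.2 a
    | Sum.inr ⟨i, Sum.inl b⟩ => if x.1 = i then B2 x.1 x.2.1 x.2.2 b else 0
    | Sum.inr ⟨i, Sum.inr (j, b)⟩ =>
        if (⟨x.1, x.2.1⟩ : Σ i, Fin (n i)) = ⟨i, j⟩ then B3 x.1 x.2.1 x.2.2 b else 0

section Defs

variable {p q₁ q₂ m : ℕ} {n : Fin m → ℕ} {k : (i : Fin m) → Fin (n i) → ℕ}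

/-- `D₀ᵢⱼ := Qᵢⱼᵀ Bᵢⱼ`. -/
def D0 (Qij : (i : Fin m) → (j : Fin (n i)) →
      Matrix (Fin q₂ ⊕ Fin (k i j)) (Fin q₂ ⊕ Fin (k i j)) ℝ)
    (B1 : (i : Fin m) → (j : Fin (n i)) → Matrix (Fin q₂ ⊕ Fin (k i j)) (Fin p) ℝ)
    (i : Fin m) (j : Fin (n i)) : Matrix (Fin q₂ ⊕ Fin (k i j)) (Fin p) ℝ :=
  (Qij i j)ᵀ * B1 i j

/-- `D₁ᵢⱼ`: the first `q₂` rows of `D₀ᵢⱼ` (with `B` one of the design blocks). -/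
def D1 (Qij : (i : Fin m) → (j : Fin (n i)) →
      Matrix (Fin q₂ ⊕ Fin (k i j)) (Fin q₂ ⊕ Fin (k i j)) ℝ)
    (B1 : (i : Fin m) → (j : Fin (n i)) → Matrix (Fin q₂ ⊕ Fin (k i j)) (Fin p) ℝ)
    (i : Fin m) (j : Fin (n i)) : Matrix (Fin q₂) (Fin p) ℝ :=
  (D0 Qij B1 i j).submatrix Sum.inl id

/-- `D₂ᵢⱼ`: the remaining `oᵢⱼ − q₂` rows of `D₀ᵢⱼ`. -/
def D2 (Qij : (i : Fin m) → (j : Fin (n i)) →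
      Matrix (Fin q₂ ⊕ Fin (k i j)) (Fin q₂ ⊕ Fin (k i j)) ℝ)
    (B1 : (i : Fin m) → (j : Fin (n i)) → Matrix (Fin q₂ ⊕ Fin (k i j)) (Fin p) ℝ)
    (i : Fin m) (j : Fin (n i)) : Matrix (Fin (k i j)) (Fin p) ℝ :=
  (D0 Qij B1 i j).submatrix Sum.inr id

/-- The row-stack over `j` of `D₂ᵢⱼ` (also used for `D̊₂ᵢⱼ`). -/
def stackD2 (Qij : (i : Fin m) → (j : Fin (n i)) →
      Matrix (Fin q₂ ⊕ Fin (k i j)) (Fin q₂ ⊕ Fin (k i j)) ℝ)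
    (B1 : (i : Fin m) → (j : Fin (n i)) → Matrix (Fin q₂ ⊕ Fin (k i j)) (Fin p) ℝ)
    (i : Fin m) : Matrix ((j : Fin (n i)) × Fin (k i j)) (Fin p) ℝ :=
  Matrix.of fun x a => D2 Qij B1 i x.1 x.2 a

/-- `C₀ᵢ := Qᵢᵀ (row-stack over j of D₂ᵢⱼ)`. -/
def C0 {s : Fin m → ℕ}
    (Qi : (i : Fin m) → Matrix ((j : Fin (n i)) × Fin (k i j)) (Fin q₁ ⊕ Fin (s i)) ℝ)
    (Qij : (i : Fin m) → (j : Fin (n i)) →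
      Matrix (Fin q₂ ⊕ Fin (k i j)) (Fin q₂ ⊕ Fin (k i j)) ℝ)
    (B1 : (i : Fin m) → (j : Fin (n i)) → Matrix (Fin q₂ ⊕ Fin (k i j)) (Fin p) ℝ)
    (i : Fin m) : Matrix (Fin q₁ ⊕ Fin (s i)) (Fin p) ℝ :=
  (Qi i)ᵀ * stackD2 Qij B1 i

/-- `C₁ᵢ`: the first `q₁` rows of `C₀ᵢ`. -/
def C1 {s : Fin m → ℕ}
    (Qi : (i : Fin m) → Matrix ((j : Fin (n i)) × Fin (k i j)) (Fin q₁ ⊕ Fin (s i)) ℝ)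
    (Qij : (i : Fin m) → (j : Fin (n i)) →
      Matrix (Fin q₂ ⊕ Fin (k i j)) (Fin q₂ ⊕ Fin (k i j)) ℝ)
    (B1 : (i : Fin m) → (j : Fin (n i)) → Matrix (Fin q₂ ⊕ Fin (k i j)) (Fin p) ℝ)
    (i : Fin m) : Matrix (Fin q₁) (Fin p) ℝ :=
  (C0 Qi Qij B1 i).submatrix Sum.inl id

/-- `C₂ᵢ`: the remaining rows of `C₀ᵢ`. -/
def C2 {s : Fin m → ℕ}
    (Qi : (i : Fin m) → Matrix ((j : Fin (n i)) × Fin (k i j)) (Fin q₁ ⊕ Fin (s i)) ℝ)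
    (Qij : (i : Fin m) → (j : Fin (n i)) →
      Matrix (Fin q₂ ⊕ Fin (k i j)) (Fin q₂ ⊕ Fin (k i j)) ℝ)
    (B1 : (i : Fin m) → (j : Fin (n i)) → Matrix (Fin q₂ ⊕ Fin (k i j)) (Fin p) ℝ)
    (i : Fin m) : Matrix (Fin (s i)) (Fin p) ℝ :=
  (C0 Qi Qij B1 i).submatrix Sum.inr id

/-- The row-stack over `i` of `C₂ᵢ`. -/
def stackC2 {s : Fin m → ℕ}
    (Qi : (i : Fin m) → Matrix ((j : Fin (n i)) × Fin (k i j)) (Fin q₁ ⊕ Fin (s i)) ℝ)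
    (Qij : (i : Fin m) → (j : Fin (n i)) →
      Matrix (Fin q₂ ⊕ Fin (k i j)) (Fin q₂ ⊕ Fin (k i j)) ℝ)
    (B1 : (i : Fin m) → (j : Fin (n i)) → Matrix (Fin q₂ ⊕ Fin (k i j)) (Fin p) ℝ) :
    Matrix ((i : Fin m) × Fin (s i)) (Fin p) ℝ :=
  Matrix.of fun x a => C2 Qi Qij B1 x.1 x.2 a

end Defs

namespace ThreeLevelAux

open Matrix

section Generic

variable {N ρ : Type*} [Fintype N] [Fintype ρ]

lemma tmul_sigma {ι₀ : Type*} [Fintype ι₀] {κ : ι₀ → Type*} [∀ a, Fintype (κ a)]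
    (M M' : Matrix ((a : ι₀) × κ a) N ℝ) :
    Mᵀ * M' = ∑ a, (M.submatrix (Sigma.mk a) id)ᵀ * (M'.submatrix (Sigma.mk a) id) := by
  ext x y
  rw [Matrix.sum_apply]
  simp only [Matrix.mul_apply, Matrix.transpose_apply, Matrix.submatrix_apply, id_eq]
  rw [← Finset.univ_sigma_univ, Finset.sum_sigma]

lemma tmul_sum {α β : Type*} [Fintype α] [Fintype β]
    (M M' : Matrix (α ⊕ β) N ℝ) :
    Mᵀ * M' = (M.submatrix Sum.inl id)ᵀ * (M'.submatrix Sum.inl id)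
      + (M.submatrix Sum.inr id)ᵀ * (M'.submatrix Sum.inr id) := by
  ext x y
  simp only [Matrix.add_apply, Matrix.mul_apply, Matrix.transpose_apply,
    Matrix.submatrix_apply, id_eq]
  rw [Fintype.sum_sum_type]

lemma tmul_prod {α β : Type*} [Fintype α] [Fintype β]
    (M M' : Matrix (α × β) N ℝ) :
    Mᵀ * M' = ∑ a, (M.submatrix (Prod.mk a) id)ᵀ * (M'.submatrix (Prod.mk a) id) := by
  ext x y
  rw [Matrix.sum_apply]
  simp only [Matrix.mul_apply, Matrix.transpose_apply, Matrix.submatrix_apply, id_eq]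
  rw [← Finset.univ_product_univ, Finset.sum_product]

lemma tmul_conj [DecidableEq ρ] {σ : Type*} [Fintype σ] (Qm : Matrix ρ σ ℝ)
    (hQm : Qm * Qmᵀ = 1) (M M' : Matrix ρ N ℝ) :
    Mᵀ * M' = (Qmᵀ * M)ᵀ * (Qmᵀ * M') := by
  rw [Matrix.transpose_mul, Matrix.transpose_transpose, Matrix.mul_assoc,
    ← Matrix.mul_assoc Qm, hQm, Matrix.one_mul]

lemma isUnit_det_of_rank_eq {ι : Type*} [Fintype ι] [DecidableEq ι]
    (A : Matrix ι ι ℝ) (h : A.rank = Fintype.card ι) : IsUnit A.det := by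
  have hr : LinearMap.range A.mulVecLin = ⊤ := by
    apply Submodule.eq_top_of_finrank_eq
    rw [Module.finrank_fintype_fun_eq_card]
    exact h
  have hsurj : Function.Surjective A.mulVec := by
    intro y
    obtain ⟨x, hx⟩ := LinearMap.range_eq_top.mp hr y
    exact ⟨x, hx⟩
  exact (Matrix.isUnit_iff_isUnit_det A).mp (Matrix.mulVec_surjective_iff_isUnit.mp hsurj)

end Generic

section Main

variable {p q₁ q₂ m : ℕ} {n : Fin m → ℕ} {k : (i : Fin m) → Fin (n i) → ℕ} {s : Fin m → ℕ}

variable (Qij : (i : Fin m) → (j : Fin (n i)) →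
      Matrix (Fin q₂ ⊕ Fin (k i j)) (Fin q₂ ⊕ Fin (k i j)) ℝ)
variable (Qi : (i : Fin m) → Matrix ((j : Fin (n i)) × Fin (k i j)) (Fin q₁ ⊕ Fin (s i)) ℝ)
variable (B1 : (i : Fin m) → (j : Fin (n i)) → Matrix (Fin q₂ ⊕ Fin (k i j)) (Fin p) ℝ)
variable (B2 : (i : Fin m) → (j : Fin (n i)) → Matrix (Fin q₂ ⊕ Fin (k i j)) (Fin q₁) ℝ)
variable (B3 : (i : Fin m) → (j : Fin (n i)) → Matrix (Fin q₂ ⊕ Fin (k i j)) (Fin q₂) ℝ)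
variable (R : Matrix (Fin p) (Fin p) ℝ)

/-- Row block `(i,j)` of the design matrix. -/
def Mb (i : Fin m) (j : Fin (n i)) :
    Matrix (Fin q₂ ⊕ Fin (k i j)) (Fin p ⊕ (Σ i : Fin m, Fin q₁ ⊕ (Fin (n i) × Fin q₂))) ℝ :=
  (threeLevelB B1 B2 B3).submatrix (fun r => ⟨i, j, r⟩) id

def Dt (i : Fin m) (j : Fin (n i)) :
    Matrix (Fin q₂ ⊕ Fin (k i j)) (Fin p ⊕ (Σ i : Fin m, Fin q₁ ⊕ (Fin (n i) × Fin q₂))) ℝ :=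
  (Qij i j)ᵀ * Mb B1 B2 B3 i j

def Nt (i : Fin m) :
    Matrix ((j : Fin (n i)) × Fin (k i j))
      (Fin p ⊕ (Σ i : Fin m, Fin q₁ ⊕ (Fin (n i) × Fin q₂))) ℝ :=
  Matrix.of fun x y => Dt Qij B1 B2 B3 i x.1 (Sum.inr x.2) y

def Ct (i : Fin m) :
    Matrix (Fin q₁ ⊕ Fin (s i)) (Fin p ⊕ (Σ i : Fin m, Fin q₁ ⊕ (Fin (n i) × Fin q₂))) ℝ :=
  (Qi i)ᵀ * Nt Qij B1 B2 B3 i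

def SS :
    Matrix ((i : Fin m) × Fin (s i)) (Fin p ⊕ (Σ i : Fin m, Fin q₁ ⊕ (Fin (n i) × Fin q₂))) ℝ :=
  Matrix.of fun x y => Ct Qij Qi B1 B2 B3 x.1 (Sum.inr x.2) y

def Fm :
    Matrix (Fin p ⊕ (Σ i : Fin m, Fin q₁ ⊕ (Fin (n i) × Fin q₂)))
      (Fin p ⊕ (Σ i : Fin m, Fin q₁ ⊕ (Fin (n i) × Fin q₂))) ℝ :=
  Matrix.of fun z y =>
    match z with
    | Sum.inl a => (match y with | Sum.inl b => R a b | Sum.inr _ => 0)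
    | Sum.inr ⟨i, Sum.inl a⟩ => Ct Qij Qi B1 B2 B3 i (Sum.inl a) y
    | Sum.inr ⟨i, Sum.inr ja⟩ => Dt Qij B1 B2 B3 i ja.1 (Sum.inl ja.2) y

lemma Nt_col_inl (i : Fin m) (x : (j : Fin (n i)) × Fin (k i j)) (a : Fin p) :
    Nt Qij B1 B2 B3 i x (Sum.inl a) = stackD2 Qij B1 i x a := by
  simp [Nt, Dt, Mb, threeLevelB, stackD2, D2, D0, Matrix.mul_apply]

lemma Nt_col_inrl (i : Fin m) (x : (j : Fin (n i)) × Fin (k i j)) (i' : Fin m) (b : Fin q₁) :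
    Nt Qij B1 B2 B3 i x (Sum.inr ⟨i', Sum.inl b⟩) =
      if i = i' then stackD2 Qij B2 i x b else 0 := by
  by_cases h : i = i' <;>
    simp [Nt, Dt, Mb, threeLevelB, stackD2, D2, D0, Matrix.mul_apply, h]

lemma Nt_col_inrr (hQij : ∀ i j, (Qij i j)ᵀ * Qij i j = 1)
    (Rij : (i : Fin m) → (j : Fin (n i)) → Matrix (Fin q₂) (Fin q₂) ℝ)
    (hQRij : ∀ i j, B3 i j = Qij i j * Matrix.fromRows (Rij i j) 0)
    (i : Fin m) (x : (j : Fin (n i)) × Fin (k i j)) (i' : Fin m) (j' : Fin (n i'))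
    (b : Fin q₂) :
    Nt Qij B1 B2 B3 i x (Sum.inr ⟨i', Sum.inr (j', b)⟩) = 0 := by
  by_cases h : (⟨i, x.1⟩ : Σ i, Fin (n i)) = ⟨i', j'⟩
  · have key : (Qij i x.1)ᵀ * B3 i x.1 = Matrix.fromRows (Rij i x.1) 0 := by
      rw [hQRij]
      exact (show (Qij i x.1)ᵀ * (Qij i x.1 * Matrix.fromRows (Rij i x.1)
          (0 : Matrix (Fin (k i x.1)) (Fin q₂) ℝ)) = _ by
        rw [← Matrix.mul_assoc, hQij, Matrix.one_mul])
    have h2 : Nt Qij B1 B2 B3 i x (Sum.inr ⟨i', Sum.inr (j', b)⟩)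
        = ((Qij i x.1)ᵀ * B3 i x.1) (Sum.inr x.2) b := by
      simp [Nt, Dt, Mb, threeLevelB, Matrix.mul_apply, h]
    rw [h2, key, Matrix.fromRows_apply_inr, Matrix.zero_apply]
  · simp [Nt, Dt, Mb, threeLevelB, Matrix.mul_apply, h]

lemma Ct_col_inl (i : Fin m) (z : Fin q₁ ⊕ Fin (s i)) (a : Fin p) :
    Ct Qij Qi B1 B2 B3 i z (Sum.inl a) = C0 Qi Qij B1 i z a := by
  simp [Ct, C0, Matrix.mul_apply, Nt_col_inl]

lemma Ct_col_inrl (hQi : ∀ i, (Qi i)ᵀ * Qi i = 1)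
    (Ri : (i : Fin m) → Matrix (Fin q₁) (Fin q₁) ℝ)
    (hQRi : ∀ i, stackD2 Qij B2 i = Qi i * Matrix.fromRows (Ri i) 0)
    (i : Fin m) (z : Fin q₁ ⊕ Fin (s i)) (i' : Fin m) (b : Fin q₁) :
    Ct Qij Qi B1 B2 B3 i z (Sum.inr ⟨i', Sum.inl b⟩) =
      if i = i' then Matrix.fromRows (Ri i) 0 z b else 0 := by
  have key : (Qi i)ᵀ * stackD2 Qij B2 i = Matrix.fromRows (Ri i) 0 := by
    rw [hQRi]
    exact (show (Qi i)ᵀ * (Qi i * Matrix.fromRows (Ri i)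
        (0 : Matrix (Fin (s i)) (Fin q₁) ℝ)) = _ by
      rw [← Matrix.mul_assoc, hQi, Matrix.one_mul])
  by_cases h : i = i'
  · have h2 : Ct Qij Qi B1 B2 B3 i z (Sum.inr ⟨i', Sum.inl b⟩)
        = ((Qi i)ᵀ * stackD2 Qij B2 i) z b := by
      simp [Ct, Matrix.mul_apply, Nt_col_inrl, h]
    rw [h2, key, if_pos h]
  · simp [Ct, Matrix.mul_apply, Nt_col_inrl, h]

lemma Ct_col_inrr (hQij : ∀ i j, (Qij i j)ᵀ * Qij i j = 1)
    (Rij : (i : Fin m) → (j : Fin (n i)) → Matrix (Fin q₂) (Fin q₂) ℝ)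
    (hQRij : ∀ i j, B3 i j = Qij i j * Matrix.fromRows (Rij i j) 0)
    (i : Fin m) (z : Fin q₁ ⊕ Fin (s i)) (i' : Fin m) (w : Fin (n i') × Fin q₂) :
    Ct Qij Qi B1 B2 B3 i z (Sum.inr ⟨i', Sum.inr w⟩) = 0 := by
  obtain ⟨j', b⟩ := w
  simp [Ct, Matrix.mul_apply, Nt_col_inrr Qij B1 B2 B3 hQij Rij hQRij]

lemma SS_col_inl (z : (i : Fin m) × Fin (s i)) (a : Fin p) :
    SS Qij Qi B1 B2 B3 z (Sum.inl a) = stackC2 Qi Qij B1 z a := by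
  simp [SS, stackC2, C2, Ct_col_inl]

lemma SS_col_inr (hQij : ∀ i j, (Qij i j)ᵀ * Qij i j = 1)
    (Rij : (i : Fin m) → (j : Fin (n i)) → Matrix (Fin q₂) (Fin q₂) ℝ)
    (hQRij : ∀ i j, B3 i j = Qij i j * Matrix.fromRows (Rij i j) 0)
    (hQi : ∀ i, (Qi i)ᵀ * Qi i = 1)
    (Ri : (i : Fin m) → Matrix (Fin q₁) (Fin q₁) ℝ)
    (hQRi : ∀ i, stackD2 Qij B2 i = Qi i * Matrix.fromRows (Ri i) 0)
    (z : (i : Fin m) × Fin (s i)) (i' : Fin m) (w : Fin q₁ ⊕ (Fin (n i') × Fin q₂)) :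
    SS Qij Qi B1 B2 B3 z (Sum.inr ⟨i', w⟩) = 0 := by
  have hz : ∀ c, SS Qij Qi B1 B2 B3 z c = Ct Qij Qi B1 B2 B3 z.1 (Sum.inr z.2) c :=
    fun _ => rfl
  obtain (b | w) := w
  · rw [hz, Ct_col_inrl Qij Qi B1 B2 B3 hQi Ri hQRi]
    split_ifs <;> simp
  · rw [hz, Ct_col_inrr Qij Qi B1 B2 B3 hQij Rij hQRij]

lemma Dt_col_ne (i : Fin m) (j : Fin (n i)) {i' : Fin m} {j' : Fin (n i')}
    (hne : (⟨i, j⟩ : Σ i, Fin (n i)) ≠ ⟨i', j'⟩) (r : Fin q₂ ⊕ Fin (k i j)) (b : Fin q₂) :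
    Dt Qij B1 B2 B3 i j r (Sum.inr ⟨i', Sum.inr (j', b)⟩) = 0 := by
  simp [Dt, Mb, threeLevelB, Matrix.mul_apply, hne]

/-- Block weight function used for block-triangularity of `Fm`. -/
noncomputable def wt (x : Fin p ⊕ (Σ i : Fin m, Fin q₁ ⊕ (Fin (n i) × Fin q₂))) : ℕ :=
  match x with
  | Sum.inl _ => 0
  | Sum.inr ⟨i, Sum.inl _⟩ => 1 + i
  | Sum.inr ⟨i, Sum.inr jb⟩ => 1 + m + (Fintype.equivFin (Σ i : Fin m, Fin (n i)) ⟨i, jb.1⟩)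

lemma Fm_tri (hQij : ∀ i j, (Qij i j)ᵀ * Qij i j = 1)
    (Rij : (i : Fin m) → (j : Fin (n i)) → Matrix (Fin q₂) (Fin q₂) ℝ)
    (hQRij : ∀ i j, B3 i j = Qij i j * Matrix.fromRows (Rij i j) 0)
    (hQi : ∀ i, (Qi i)ᵀ * Qi i = 1)
    (Ri : (i : Fin m) → Matrix (Fin q₁) (Fin q₁) ℝ)
    (hQRi : ∀ i, stackD2 Qij B2 i = Qi i * Matrix.fromRows (Ri i) 0) :
    (Fm Qij Qi B1 B2 B3 R)ᵀ.BlockTriangular wt := by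
  intro x y h
  rw [Matrix.transpose_apply]
  rcases y with a | ⟨i, (a | ⟨j, a⟩)⟩ <;> rcases x with b | ⟨i', (b | ⟨j', b⟩)⟩ <;>
      simp only [wt] at h
  · omega
  · rfl
  · rfl
  · omega
  · have hne : i ≠ i' := by rintro rfl; omega
    show Ct Qij Qi B1 B2 B3 i (Sum.inl a) (Sum.inr ⟨i', Sum.inl b⟩) = 0
    rw [Ct_col_inrl Qij Qi B1 B2 B3 hQi Ri hQRi, if_neg hne]
  · exact Ct_col_inrr Qij Qi B1 B2 B3 hQij Rij hQRij i (Sum.inl a) i' (j', b)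
  · omega
  · have := i'.isLt; omega
  · have hne : (⟨i, j⟩ : Σ i, Fin (n i)) ≠ ⟨i', j'⟩ := by
      intro e; rw [e] at h; omega
    exact Dt_col_ne Qij B1 B2 B3 i j hne (Sum.inl a) b

lemma SS_eq {t : ℕ} (Q : Matrix ((i : Fin m) × Fin (s i)) (Fin p ⊕ Fin t) ℝ)
    (hQ : Qᵀ * Q = 1)
    (hQR : stackC2 Qi Qij B1 = Q * Matrix.fromRows R 0)
    (hQij : ∀ i j, (Qij i j)ᵀ * Qij i j = 1)
    (Rij : (i : Fin m) → (j : Fin (n i)) → Matrix (Fin q₂) (Fin q₂) ℝ)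
    (hQRij : ∀ i j, B3 i j = Qij i j * Matrix.fromRows (Rij i j) 0)
    (hQi : ∀ i, (Qi i)ᵀ * Qi i = 1)
    (Ri : (i : Fin m) → Matrix (Fin q₁) (Fin q₁) ℝ)
    (hQRi : ∀ i, stackD2 Qij B2 i = Qi i * Matrix.fromRows (Ri i) 0) :
    (SS Qij Qi B1 B2 B3)ᵀ * SS Qij Qi B1 B2 B3 =
      ((Fm Qij Qi B1 B2 B3 R).submatrix Sum.inl id)ᵀ *
        ((Fm Qij Qi B1 B2 B3 R).submatrix Sum.inl id) := by
  have h0 : (Matrix.fromRows R (0 : Matrix (Fin t) (Fin p) ℝ))ᵀ *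
      Matrix.fromRows R (0 : Matrix (Fin t) (Fin p) ℝ)
      = Rᵀ * R := by
    ext a b
    simp [Matrix.mul_apply, Fintype.sum_sum_type]
  have hsc : (stackC2 Qi Qij B1)ᵀ * stackC2 Qi Qij B1 = Rᵀ * R := by
    rw [hQR]
    exact (show (Q * Matrix.fromRows R (0 : Matrix (Fin t) (Fin p) ℝ))ᵀ *
        (Q * Matrix.fromRows R (0 : Matrix (Fin t) (Fin p) ℝ)) = Rᵀ * R by
      rw [Matrix.transpose_mul, Matrix.mul_assoc, ← Matrix.mul_assoc Qᵀ, hQ,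
        Matrix.one_mul, h0])
  ext x y
  rcases x with a | ⟨i', w⟩
  · rcases y with b | ⟨i'', w'⟩
    · have l : ((SS Qij Qi B1 B2 B3)ᵀ * SS Qij Qi B1 B2 B3) (Sum.inl a) (Sum.inl b)
          = ((stackC2 Qi Qij B1)ᵀ * stackC2 Qi Qij B1) a b := by
        simp [Matrix.mul_apply, SS_col_inl]
      rw [l, hsc]
      simp [Matrix.mul_apply, Fm]
    · simp [Matrix.mul_apply, Fm,
        SS_col_inr Qij Qi B1 B2 B3 hQij Rij hQRij hQi Ri hQRi]
  · simp [Matrix.mul_apply, Fm,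
      SS_col_inr Qij Qi B1 B2 B3 hQij Rij hQRij hQi Ri hQRi]

lemma main_eq {t : ℕ} (Q : Matrix ((i : Fin m) × Fin (s i)) (Fin p ⊕ Fin t) ℝ)
    (hQ : Qᵀ * Q = 1)
    (hQR : stackC2 Qi Qij B1 = Q * Matrix.fromRows R 0)
    (hQij : ∀ i j, (Qij i j)ᵀ * Qij i j = 1)
    (hQij' : ∀ i j, Qij i j * (Qij i j)ᵀ = 1)
    (Rij : (i : Fin m) → (j : Fin (n i)) → Matrix (Fin q₂) (Fin q₂) ℝ)
    (hQRij : ∀ i j, B3 i j = Qij i j * Matrix.fromRows (Rij i j) 0)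
    (hQi : ∀ i, (Qi i)ᵀ * Qi i = 1) (hQi' : ∀ i, Qi i * (Qi i)ᵀ = 1)
    (Ri : (i : Fin m) → Matrix (Fin q₁) (Fin q₁) ℝ)
    (hQRi : ∀ i, stackD2 Qij B2 i = Qi i * Matrix.fromRows (Ri i) 0) :
    (threeLevelB B1 B2 B3)ᵀ * threeLevelB B1 B2 B3 =
      (Fm Qij Qi B1 B2 B3 R)ᵀ * Fm Qij Qi B1 B2 B3 R := by
  have hB1 : (threeLevelB B1 B2 B3)ᵀ * threeLevelB B1 B2 B3
      = ∑ i, ∑ j, (Mb B1 B2 B3 i j)ᵀ * Mb B1 B2 B3 i j := by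
    rw [tmul_sigma]
    exact Finset.sum_congr rfl fun i _ => tmul_sigma _ _
  have step1 : ∀ i j, (Mb B1 B2 B3 i j)ᵀ * Mb B1 B2 B3 i j
      = ((Dt Qij B1 B2 B3 i j).submatrix Sum.inl id)ᵀ *
          ((Dt Qij B1 B2 B3 i j).submatrix Sum.inl id)
        + ((Dt Qij B1 B2 B3 i j).submatrix Sum.inr id)ᵀ *
          ((Dt Qij B1 B2 B3 i j).submatrix Sum.inr id) := by
    intro i j
    rw [tmul_conj (Qij i j) (hQij' i j)]
    exact tmul_sum _ _
  have step2 : ∀ i, ∑ j, ((Dt Qij B1 B2 B3 i j).submatrix Sum.inr id)ᵀ *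
        ((Dt Qij B1 B2 B3 i j).submatrix Sum.inr id)
      = (Nt Qij B1 B2 B3 i)ᵀ * Nt Qij B1 B2 B3 i := by
    have hsub : ∀ i j, (Nt Qij B1 B2 B3 i).submatrix (Sigma.mk j) id
        = (Dt Qij B1 B2 B3 i j).submatrix Sum.inr id := fun i j => by ext x y; rfl
    intro i
    rw [tmul_sigma (Nt Qij B1 B2 B3 i) (Nt Qij B1 B2 B3 i)]
    exact Finset.sum_congr rfl fun j _ => by rw [hsub i j]
  have step3 : ∀ i, (Nt Qij B1 B2 B3 i)ᵀ * Nt Qij B1 B2 B3 i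
      = ((Ct Qij Qi B1 B2 B3 i).submatrix Sum.inl id)ᵀ *
          ((Ct Qij Qi B1 B2 B3 i).submatrix Sum.inl id)
        + ((Ct Qij Qi B1 B2 B3 i).submatrix Sum.inr id)ᵀ *
          ((Ct Qij Qi B1 B2 B3 i).submatrix Sum.inr id) := by
    intro i
    rw [tmul_conj (Qi i) (hQi' i)]
    exact tmul_sum _ _
  have step4 : ∑ i, ((Ct Qij Qi B1 B2 B3 i).submatrix Sum.inr id)ᵀ *
        ((Ct Qij Qi B1 B2 B3 i).submatrix Sum.inr id)
      = (SS Qij Qi B1 B2 B3)ᵀ * SS Qij Qi B1 B2 B3 := by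
    have hsub : ∀ i, (SS Qij Qi B1 B2 B3).submatrix (Sigma.mk i) id
        = (Ct Qij Qi B1 B2 B3 i).submatrix Sum.inr id := fun i => by ext x y; rfl
    rw [tmul_sigma (SS Qij Qi B1 B2 B3) (SS Qij Qi B1 B2 B3)]
    exact Finset.sum_congr rfl fun i _ => by rw [hsub i]
  have hF : (Fm Qij Qi B1 B2 B3 R)ᵀ * Fm Qij Qi B1 B2 B3 R
      = ((Fm Qij Qi B1 B2 B3 R).submatrix Sum.inl id)ᵀ *
          ((Fm Qij Qi B1 B2 B3 R).submatrix Sum.inl id)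
        + ∑ i, (((Ct Qij Qi B1 B2 B3 i).submatrix Sum.inl id)ᵀ *
            ((Ct Qij Qi B1 B2 B3 i).submatrix Sum.inl id)
          + ∑ j, ((Dt Qij B1 B2 B3 i j).submatrix Sum.inl id)ᵀ *
            ((Dt Qij B1 B2 B3 i j).submatrix Sum.inl id)) := by
    have hsub1 : ∀ i, (((Fm Qij Qi B1 B2 B3 R).submatrix Sum.inr id).submatrix
          (Sigma.mk i) id).submatrix Sum.inl id
        = (Ct Qij Qi B1 B2 B3 i).submatrix Sum.inl id := fun i => by ext x y; rfl
    have hsub2 : ∀ i j, ((((Fm Qij Qi B1 B2 B3 R).submatrix Sum.inr id).submatrix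
          (Sigma.mk i) id).submatrix Sum.inr id).submatrix (Prod.mk j) id
        = (Dt Qij B1 B2 B3 i j).submatrix Sum.inl id := fun i j => by ext x y; rfl
    rw [tmul_sum]
    congr 1
    rw [tmul_sigma]
    refine Finset.sum_congr rfl fun i _ => ?_
    rw [tmul_sum, hsub1 i, tmul_prod]
    congr 1
  calc (threeLevelB B1 B2 B3)ᵀ * threeLevelB B1 B2 B3
      = ∑ i, ∑ j, (Mb B1 B2 B3 i j)ᵀ * Mb B1 B2 B3 i j := hB1
    _ = ∑ i, (∑ j, ((Dt Qij B1 B2 B3 i j).submatrix Sum.inl id)ᵀ *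
            ((Dt Qij B1 B2 B3 i j).submatrix Sum.inl id)
          + ∑ j, ((Dt Qij B1 B2 B3 i j).submatrix Sum.inr id)ᵀ *
            ((Dt Qij B1 B2 B3 i j).submatrix Sum.inr id)) := by
        refine Finset.sum_congr rfl fun i _ => ?_
        rw [← Finset.sum_add_distrib]
        exact Finset.sum_congr rfl fun j _ => step1 i j
    _ = ∑ i, (∑ j, ((Dt Qij B1 B2 B3 i j).submatrix Sum.inl id)ᵀ *
            ((Dt Qij B1 B2 B3 i j).submatrix Sum.inl id)
          + (((Ct Qij Qi B1 B2 B3 i).submatrix Sum.inl id)ᵀ *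
            ((Ct Qij Qi B1 B2 B3 i).submatrix Sum.inl id)
          + ((Ct Qij Qi B1 B2 B3 i).submatrix Sum.inr id)ᵀ *
            ((Ct Qij Qi B1 B2 B3 i).submatrix Sum.inr id))) := by
        refine Finset.sum_congr rfl fun i _ => ?_
        rw [step2 i, step3 i]
    _ = (∑ i, (((Ct Qij Qi B1 B2 B3 i).submatrix Sum.inl id)ᵀ *
            ((Ct Qij Qi B1 B2 B3 i).submatrix Sum.inl id)
          + ∑ j, ((Dt Qij B1 B2 B3 i j).submatrix Sum.inl id)ᵀ *
            ((Dt Qij B1 B2 B3 i j).submatrix Sum.inl id)))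
        + ∑ i, ((Ct Qij Qi B1 B2 B3 i).submatrix Sum.inr id)ᵀ *
            ((Ct Qij Qi B1 B2 B3 i).submatrix Sum.inr id) := by
        rw [← Finset.sum_add_distrib]
        refine Finset.sum_congr rfl fun i _ => ?_
        abel
    _ = (∑ i, (((Ct Qij Qi B1 B2 B3 i).submatrix Sum.inl id)ᵀ *
            ((Ct Qij Qi B1 B2 B3 i).submatrix Sum.inl id)
          + ∑ j, ((Dt Qij B1 B2 B3 i j).submatrix Sum.inl id)ᵀ *
            ((Dt Qij B1 B2 B3 i j).submatrix Sum.inl id)))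
        + ((Fm Qij Qi B1 B2 B3 R).submatrix Sum.inl id)ᵀ *
          ((Fm Qij Qi B1 B2 B3 R).submatrix Sum.inl id) := by
        rw [step4, SS_eq Qij Qi B1 B2 B3 R Q hQ hQR hQij Rij hQRij hQi Ri hQRi]
    _ = (Fm Qij Qi B1 B2 B3 R)ᵀ * Fm Qij Qi B1 B2 B3 R := by
        rw [hF]; abel

end Main

end ThreeLevelAux


theorem threeLevelLS_inverse_block11 {p q₁ q₂ m t : ℕ} {n : Fin m → ℕ}
    {k : (i : Fin m) → Fin (n i) → ℕ} {s : Fin m → ℕ}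
    (hp : 0 < p) (hq₁ : 0 < q₁) (hq₂ : 0 < q₂) (hm : 0 < m) (hn : ∀ i, 0 < n i)
    (B1 : (i : Fin m) → (j : Fin (n i)) → Matrix (Fin q₂ ⊕ Fin (k i j)) (Fin p) ℝ)
    (B2 : (i : Fin m) → (j : Fin (n i)) → Matrix (Fin q₂ ⊕ Fin (k i j)) (Fin q₁) ℝ)
    (B3 : (i : Fin m) → (j : Fin (n i)) → Matrix (Fin q₂ ⊕ Fin (k i j)) (Fin q₂) ℝ)
    (hrank : (threeLevelB B1 B2 B3).rank =
      Fintype.card (Fin p ⊕ (Σ i : Fin m, Fin q₁ ⊕ (Fin (n i) × Fin q₂))))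
    (Qij : (i : Fin m) → (j : Fin (n i)) →
      Matrix (Fin q₂ ⊕ Fin (k i j)) (Fin q₂ ⊕ Fin (k i j)) ℝ)
    (hQij : ∀ i j, (Qij i j)ᵀ * Qij i j = 1) (hQij' : ∀ i j, Qij i j * (Qij i j)ᵀ = 1)
    (Rij : (i : Fin m) → (j : Fin (n i)) → Matrix (Fin q₂) (Fin q₂) ℝ)
    (hRijtri : ∀ i j, (Rij i j).BlockTriangular id)
    (hRij : ∀ i j, IsUnit (Rij i j).det)
    (hQRij : ∀ i j, B3 i j = Qij i j * Matrix.fromRows (Rij i j) 0)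
    (Qi : (i : Fin m) → Matrix ((j : Fin (n i)) × Fin (k i j)) (Fin q₁ ⊕ Fin (s i)) ℝ)
    (hQi : ∀ i, (Qi i)ᵀ * Qi i = 1) (hQi' : ∀ i, Qi i * (Qi i)ᵀ = 1)
    (Ri : (i : Fin m) → Matrix (Fin q₁) (Fin q₁) ℝ)
    (hRitri : ∀ i, (Ri i).BlockTriangular id)
    (hRi : ∀ i, IsUnit (Ri i).det)
    (hQRi : ∀ i, stackD2 Qij B2 i = Qi i * Matrix.fromRows (Ri i) 0)
    (Q : Matrix ((i : Fin m) × Fin (s i)) (Fin p ⊕ Fin t) ℝ)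
    (hQ : Qᵀ * Q = 1) (hQ' : Q * Qᵀ = 1)
    (R : Matrix (Fin p) (Fin p) ℝ)
    (hRtri : R.BlockTriangular id) (hR : IsUnit R.det)
    (hQR : stackC2 Qi Qij B1 = Q * Matrix.fromRows R 0)
    :
    IsUnit ((threeLevelB B1 B2 B3)ᵀ * threeLevelB B1 B2 B3).det ∧
      (((threeLevelB B1 B2 B3)ᵀ * threeLevelB B1 B2 B3)⁻¹).submatrix
          Sum.inl Sum.inl = R⁻¹ * (Rᵀ)⁻¹ := by
    classical
  have hmain := ThreeLevelAux.main_eq Qij Qi B1 B2 B3 R Q hQ hQR hQij hQij' Rij hQRij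
    hQi hQi' Ri hQRi
  have hAdet : IsUnit ((threeLevelB B1 B2 B3)ᵀ * threeLevelB B1 B2 B3).det :=
    ThreeLevelAux.isUnit_det_of_rank_eq _
      (by rw [Matrix.rank_transpose_mul_self]; exact hrank)
  refine ⟨hAdet, ?_⟩
  set F := ThreeLevelAux.Fm Qij Qi B1 B2 B3 R with hFdef
  have hFdet : IsUnit F.det := by
    have h1 : F.det * F.det = ((threeLevelB B1 B2 B3)ᵀ * threeLevelB B1 B2 B3).det := by
      rw [hmain, Matrix.det_mul, Matrix.det_transpose]
    exact isUnit_of_mul_isUnit_left (h1 ▸ hAdet)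
  have hFT : IsUnit (Fᵀ).det := by rwa [Matrix.det_transpose]
  haveI : Invertible Fᵀ := (Fᵀ).invertibleOfIsUnitDet hFT
  have htri := Matrix.blockTriangular_inv_of_blockTriangular
    (ThreeLevelAux.Fm_tri Qij Qi B1 B2 B3 R hQij Rij hQRij hQi Ri hQRi)
  have hinv0 : ∀ (a : Fin p) (w : Σ i : Fin m, Fin q₁ ⊕ (Fin (n i) × Fin q₂)),
      F⁻¹ (Sum.inl a) (Sum.inr w) = 0 := by
    intro a w
    have h0 : ThreeLevelAux.wt (Sum.inl a : Fin p ⊕ (Σ i : Fin m, Fin q₁ ⊕ (Fin (n i) × Fin q₂)))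
        < ThreeLevelAux.wt (p := p) (Sum.inr w) := by
      obtain ⟨i, (b | c)⟩ := w <;> simp [ThreeLevelAux.wt] <;> omega
    have h1 := htri h0
    rwa [← Matrix.transpose_nonsing_inv, Matrix.transpose_apply] at h1
  set G := (F⁻¹).submatrix Sum.inl Sum.inl with hGdef
  have hGR : G * R = 1 := by
    have h1 := Matrix.nonsing_inv_mul F hFdet
    ext a b
    have h2 := congrFun (congrFun h1 (Sum.inl a)) (Sum.inl b)
    rw [Matrix.mul_apply, Fintype.sum_sum_type] at h2
    simp only [hinv0, zero_mul, Finset.sum_const_zero, add_zero] at h2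
    have h4 : (1 : Matrix (Fin p ⊕ (Σ i : Fin m, Fin q₁ ⊕ (Fin (n i) × Fin q₂)))
          (Fin p ⊕ (Σ i : Fin m, Fin q₁ ⊕ (Fin (n i) × Fin q₂))) ℝ)
          (Sum.inl a) (Sum.inl b) = (1 : Matrix (Fin p) (Fin p) ℝ) a b := by
      simp [Matrix.one_apply]
    rw [Matrix.mul_apply, ← h4, ← h2]
    rfl
  have hRinv : R⁻¹ = G := Matrix.inv_eq_left_inv hGR
  have hAinv : ((threeLevelB B1 B2 B3)ᵀ * threeLevelB B1 B2 B3)⁻¹ = F⁻¹ * (F⁻¹)ᵀ := by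
    rw [hmain, Matrix.mul_inv_rev, Matrix.transpose_nonsing_inv]
  have hfinal : R⁻¹ * (Rᵀ)⁻¹ = G * Gᵀ := by
    rw [← Matrix.transpose_nonsing_inv, hRinv]
  rw [hAinv, hfinal]
  ext a b
  rw [Matrix.submatrix_apply, Matrix.mul_apply, Fintype.sum_sum_type, Matrix.mul_apply]
  simp only [hinv0, zero_mul, Finset.sum_const_zero, add_zero, Matrix.transpose_apply]
  rfl
end

section
/- In the three-level least squares setting with the given QR decompositions, for each 1 ≤ i ≤ m the sub-blocks of A⁻¹ satisfy A¹²ᶦ = −A¹¹ (Rᵢ⁻¹ C₁ᵢ)ᵀ and A²²ᶦ = Rᵢ⁻¹ (Rᵢ⁻ᵀ − C₁ᵢ A¹²ᶦ). -/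
open Matrix

namespace ThreeLevelAux

open Matrix

lemma isUnit_of_rank_eq_card {ι : Type*} [Fintype ι] [DecidableEq ι]
    (A : Matrix ι ι ℝ) (h : A.rank = Fintype.card ι) : IsUnit A := by
  have hs : Function.Surjective A.mulVecLin := by
    rw [← LinearMap.range_eq_top]
    apply Submodule.eq_top_of_finrank_eq
    rw [Module.finrank_pi]
    exact h
  have hinj : Function.Injective A.mulVec :=
    (LinearMap.injective_iff_surjective (f := A.mulVecLin)).mpr hs
  exact Matrix.mulVec_injective_iff_isUnit.mp hinj

variable {p q₁ q₂ m : ℕ} {n : Fin m → ℕ} {k : (i : Fin m) → Fin (n i) → ℕ} {s : Fin m → ℕ}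

/-- Column/row index type of the normal matrix. -/
abbrev Idx (p q₁ q₂ m : ℕ) (n : Fin m → ℕ) : Type :=
  Fin p ⊕ (Σ i : Fin m, Fin q₁ ⊕ (Fin (n i) × Fin q₂))

/-- The square "R-factor" matrix assembled from the three QR levels. -/
def mixM (R : Matrix (Fin p) (Fin p) ℝ)
    (C : (i : Fin m) → Matrix (Fin q₁) (Fin p) ℝ)
    (Ri : (i : Fin m) → Matrix (Fin q₁) (Fin q₁) ℝ)
    (D : (i : Fin m) → (j : Fin (n i)) → Matrix (Fin q₂) (Fin p) ℝ)
    (Dr : (i : Fin m) → (j : Fin (n i)) → Matrix (Fin q₂) (Fin q₁) ℝ)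
    (Rij : (i : Fin m) → (j : Fin (n i)) → Matrix (Fin q₂) (Fin q₂) ℝ) :
    Matrix (Idx p q₁ q₂ m n) (Idx p q₁ q₂ m n) ℝ :=
  Matrix.of fun x y =>
    match x, y with
    | Sum.inl a, Sum.inl b => R a b
    | Sum.inl _, Sum.inr _ => 0
    | Sum.inr ⟨i, Sum.inl a⟩, Sum.inl b => C i a b
    | Sum.inr ⟨i, Sum.inl a⟩, Sum.inr ⟨i', Sum.inl b⟩ => if i = i' then Ri i a b else 0
    | Sum.inr ⟨_, Sum.inl _⟩, Sum.inr ⟨_, Sum.inr _⟩ => 0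
    | Sum.inr ⟨i, Sum.inr (j, a)⟩, Sum.inl b => D i j a b
    | Sum.inr ⟨i, Sum.inr (j, a)⟩, Sum.inr ⟨i', Sum.inl b⟩ => if i = i' then Dr i j a b else 0
    | Sum.inr ⟨i, Sum.inr (j, a)⟩, Sum.inr ⟨i', Sum.inr (j', b)⟩ =>
        if (⟨i, j⟩ : Σ i, Fin (n i)) = ⟨i', j'⟩ then Rij i j a b else 0

variable {R : Matrix (Fin p) (Fin p) ℝ}
    {C : (i : Fin m) → Matrix (Fin q₁) (Fin p) ℝ}
    {Ri : (i : Fin m) → Matrix (Fin q₁) (Fin q₁) ℝ}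
    {D : (i : Fin m) → (j : Fin (n i)) → Matrix (Fin q₂) (Fin p) ℝ}
    {Dr : (i : Fin m) → (j : Fin (n i)) → Matrix (Fin q₂) (Fin q₁) ℝ}
    {Rij : (i : Fin m) → (j : Fin (n i)) → Matrix (Fin q₂) (Fin q₂) ℝ}

@[simp] lemma mixM_ll (a b) : mixM R C Ri D Dr Rij (Sum.inl a) (Sum.inl b) = R a b := rfl
@[simp] lemma mixM_lr (a y) : mixM R C Ri D Dr Rij (Sum.inl a) (Sum.inr y) = 0 := rfl
@[simp] lemma mixM_2l (i a b) :
    mixM R C Ri D Dr Rij (Sum.inr ⟨i, Sum.inl a⟩) (Sum.inl b) = C i a b := rfl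
@[simp] lemma mixM_22 (i a i' b) :
    mixM R C Ri D Dr Rij (Sum.inr ⟨i, Sum.inl a⟩) (Sum.inr ⟨i', Sum.inl b⟩)
      = if i = i' then Ri i a b else 0 := rfl
@[simp] lemma mixM_23 (i a i' c) :
    mixM R C Ri D Dr Rij (Sum.inr ⟨i, Sum.inl a⟩) (Sum.inr ⟨i', Sum.inr c⟩) = 0 := by
  obtain ⟨j', b⟩ := c; rfl
@[simp] lemma mixM_3l (i j a b) :
    mixM R C Ri D Dr Rij (Sum.inr ⟨i, Sum.inr (j, a)⟩) (Sum.inl b) = D i j a b := rfl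
@[simp] lemma mixM_32 (i j a i' b) :
    mixM R C Ri D Dr Rij (Sum.inr ⟨i, Sum.inr (j, a)⟩) (Sum.inr ⟨i', Sum.inl b⟩)
      = if i = i' then Dr i j a b else 0 := rfl
@[simp] lemma mixM_33 (i j a i' j' b) :
    mixM R C Ri D Dr Rij (Sum.inr ⟨i, Sum.inr (j, a)⟩) (Sum.inr ⟨i', Sum.inr (j', b)⟩)
      = if (⟨i, j⟩ : Σ i, Fin (n i)) = ⟨i', j'⟩ then Rij i j a b else 0 := rfl

/-- Row block 1 of `mixM` times a matrix. -/
lemma v_mul {γ : Type*} (Y : Matrix (Idx p q₁ q₂ m n) γ ℝ) :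
    (mixM R C Ri D Dr Rij).submatrix Sum.inl id * Y = R * Y.submatrix Sum.inl id := by
  ext a c
  rw [Matrix.mul_apply, Fintype.sum_sum_type]
  simp [Matrix.mul_apply]

/-- Row block 2 of `mixM` times a matrix. -/
lemma u_mul {γ : Type*} (i : Fin m) (Y : Matrix (Idx p q₁ q₂ m n) γ ℝ) :
    (mixM R C Ri D Dr Rij).submatrix (fun a => Sum.inr ⟨i, Sum.inl a⟩) id * Y =
      C i * Y.submatrix Sum.inl id
        + Ri i * Y.submatrix (fun c => Sum.inr ⟨i, Sum.inl c⟩) id := by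
  ext a c
  rw [Matrix.mul_apply, Fintype.sum_sum_type, ← Finset.univ_sigma_univ, Finset.sum_sigma]
  simp [Matrix.mul_apply, Fintype.sum_sum_type, ite_mul, Finset.sum_ite_eq,
    Finset.sum_ite_eq']

end ThreeLevelAux
section Aux3
namespace ThreeLevelAux

open Matrix

variable {p q₁ q₂ m t : ℕ} {n : Fin m → ℕ} {k : (i : Fin m) → Fin (n i) → ℕ} {s : Fin m → ℕ}

/-- level-3 residual row block, embedded into full column index. -/
def fRow (Qij : (i : Fin m) → (j : Fin (n i)) →
      Matrix (Fin q₂ ⊕ Fin (k i j)) (Fin q₂ ⊕ Fin (k i j)) ℝ)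
    (B1 : (i : Fin m) → (j : Fin (n i)) → Matrix (Fin q₂ ⊕ Fin (k i j)) (Fin p) ℝ)
    (B2 : (i : Fin m) → (j : Fin (n i)) → Matrix (Fin q₂ ⊕ Fin (k i j)) (Fin q₁) ℝ)
    (i : Fin m) (j : Fin (n i)) : Matrix (Fin (k i j)) (Idx p q₁ q₂ m n) ℝ :=
  Matrix.of fun x y =>
    match y with
    | Sum.inl b => D2 Qij B1 i j x b
    | Sum.inr ⟨i', Sum.inl b⟩ => if i = i' then D2 Qij B2 i j x b else 0
    | Sum.inr ⟨_, Sum.inr _⟩ => 0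

/-- level-2 residual row block, embedded into full column index. -/
def gRow (Qi : (i : Fin m) → Matrix ((j : Fin (n i)) × Fin (k i j)) (Fin q₁ ⊕ Fin (s i)) ℝ)
    (Qij : (i : Fin m) → (j : Fin (n i)) →
      Matrix (Fin q₂ ⊕ Fin (k i j)) (Fin q₂ ⊕ Fin (k i j)) ℝ)
    (B1 : (i : Fin m) → (j : Fin (n i)) → Matrix (Fin q₂ ⊕ Fin (k i j)) (Fin p) ℝ)
    (i : Fin m) : Matrix (Fin (s i)) (Idx p q₁ q₂ m n) ℝ :=
  Matrix.of fun x y =>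
    match y with
    | Sum.inl b => C2 Qi Qij B1 i x b
    | Sum.inr _ => 0

variable {Qij : (i : Fin m) → (j : Fin (n i)) →
      Matrix (Fin q₂ ⊕ Fin (k i j)) (Fin q₂ ⊕ Fin (k i j)) ℝ}
    {B1 : (i : Fin m) → (j : Fin (n i)) → Matrix (Fin q₂ ⊕ Fin (k i j)) (Fin p) ℝ}
    {B2 : (i : Fin m) → (j : Fin (n i)) → Matrix (Fin q₂ ⊕ Fin (k i j)) (Fin q₁) ℝ}
    {B3 : (i : Fin m) → (j : Fin (n i)) → Matrix (Fin q₂ ⊕ Fin (k i j)) (Fin q₂) ℝ}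
    {Qi : (i : Fin m) → Matrix ((j : Fin (n i)) × Fin (k i j)) (Fin q₁ ⊕ Fin (s i)) ℝ}
    {Q : Matrix ((i : Fin m) × Fin (s i)) (Fin p ⊕ Fin t) ℝ}
    {R : Matrix (Fin p) (Fin p) ℝ}
    {Ri : (i : Fin m) → Matrix (Fin q₁) (Fin q₁) ℝ}
    {Rij : (i : Fin m) → (j : Fin (n i)) → Matrix (Fin q₂) (Fin q₂) ℝ}

@[simp] lemma fRow_l (i j x b) : fRow Qij B1 B2 i j x (Sum.inl b) = D2 Qij B1 i j x b := rfl
@[simp] lemma fRow_2 (i j x i' b) :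
    fRow Qij B1 B2 i j x (Sum.inr ⟨i', Sum.inl b⟩)
      = if i = i' then D2 Qij B2 i j x b else 0 := rfl
@[simp] lemma fRow_3 (i j x i' c) :
    fRow Qij B1 B2 i j x (Sum.inr ⟨i', Sum.inr c⟩) = 0 := by obtain ⟨j', b⟩ := c; rfl
@[simp] lemma gRow_l (i x b) : gRow Qi Qij B1 i x (Sum.inl b) = C2 Qi Qij B1 i x b := rfl
@[simp] lemma gRow_r (i x y) : gRow Qi Qij B1 i x (Sum.inr y) = 0 := by
  obtain ⟨i', b | c⟩ := y <;> rfl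

/-- Notation shortcut for the assembled M matrix. -/
noncomputable abbrev theM (Qi : (i : Fin m) → Matrix ((j : Fin (n i)) × Fin (k i j)) (Fin q₁ ⊕ Fin (s i)) ℝ)
    (Qij : (i : Fin m) → (j : Fin (n i)) →
      Matrix (Fin q₂ ⊕ Fin (k i j)) (Fin q₂ ⊕ Fin (k i j)) ℝ)
    (B1 : (i : Fin m) → (j : Fin (n i)) → Matrix (Fin q₂ ⊕ Fin (k i j)) (Fin p) ℝ)
    (B2 : (i : Fin m) → (j : Fin (n i)) → Matrix (Fin q₂ ⊕ Fin (k i j)) (Fin q₁) ℝ)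
    (R : Matrix (Fin p) (Fin p) ℝ)
    (Ri : (i : Fin m) → Matrix (Fin q₁) (Fin q₁) ℝ)
    (Rij : (i : Fin m) → (j : Fin (n i)) → Matrix (Fin q₂) (Fin q₂) ℝ) :
    Matrix (Idx p q₁ q₂ m n) (Idx p q₁ q₂ m n) ℝ :=
  mixM R (C1 Qi Qij B1) Ri (D1 Qij B1) (D1 Qij B2) Rij

lemma factA (hQij : ∀ i j, (Qij i j)ᵀ * Qij i j = 1)
    (hQij' : ∀ i j, Qij i j * (Qij i j)ᵀ = 1)
    (hQRij : ∀ i j, B3 i j = Qij i j * Matrix.fromRows (Rij i j) 0) (i : Fin m) (j : Fin (n i)) :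
    ((threeLevelB B1 B2 B3).submatrix
        (fun x => (⟨i, ⟨j, x⟩⟩ : (i : Fin m) × ((j : Fin (n i)) × (Fin q₂ ⊕ Fin (k i j))))) id)ᵀ *
      (threeLevelB B1 B2 B3).submatrix (fun x => ⟨i, ⟨j, x⟩⟩) id =
    ((theM Qi Qij B1 B2 R Ri Rij).submatrix (fun a => Sum.inr ⟨i, Sum.inr (j, a)⟩) id)ᵀ *
      (theM Qi Qij B1 B2 R Ri Rij).submatrix (fun a => Sum.inr ⟨i, Sum.inr (j, a)⟩) id +
    (fRow Qij B1 B2 i j)ᵀ * fRow Qij B1 B2 i j := by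
  set e := (threeLevelB B1 B2 B3).submatrix
      (fun x => (⟨i, ⟨j, x⟩⟩ : (i : Fin m) × ((j : Fin (n i)) × (Fin q₂ ⊕ Fin (k i j))))) id with he
  have hQB3 : (Qij i j)ᵀ * B3 i j = Matrix.fromRows (Rij i j) 0 := by
    rw [hQRij]
    calc _ = ((Qij i j)ᵀ * Qij i j) * Matrix.fromRows (Rij i j) 0 := (Matrix.mul_assoc _ _ _).symm
      _ = _ := by rw [hQij]; exact Matrix.one_mul _
  have h1 : (Qij i j)ᵀ * e = Matrix.fromRows
      ((theM Qi Qij B1 B2 R Ri Rij).submatrix (fun a => Sum.inr ⟨i, Sum.inr (j, a)⟩) id)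
      (fRow Qij B1 B2 i j) := by
    ext x y
    rcases y with b | ⟨i', b | ⟨j', b⟩⟩
    · rcases x with a | a <;>
        simp [Matrix.mul_apply, threeLevelB, theM, D1, D2, D0, e]
    · by_cases hii : i = i'
      · subst hii
        rcases x with a | a <;>
          simp [Matrix.mul_apply, threeLevelB, theM, D1, D2, D0, e]
      · rcases x with a | a <;>
          simp [Matrix.mul_apply, threeLevelB, theM, D1, D2, D0, e, hii]
    · by_cases hij : (⟨i, j⟩ : Σ i, Fin (n i)) = ⟨i', j'⟩
      · cases hij
        rcases x with a | a
        · have h3a := congrFun (congrFun hQB3 (Sum.inl a)) b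
          simp only [Matrix.mul_apply, Fintype.sum_sum_type, Matrix.transpose_apply,
            Matrix.fromRows_apply_inl] at h3a
          simp [Matrix.mul_apply, threeLevelB, theM, e, Fintype.sum_sum_type, h3a]
        · have h3a := congrFun (congrFun hQB3 (Sum.inr a)) b
          simp only [Matrix.mul_apply, Fintype.sum_sum_type, Matrix.transpose_apply,
            Matrix.fromRows_apply_inr] at h3a
          simp [Matrix.mul_apply, threeLevelB, theM, e, Fintype.sum_sum_type, h3a]
      · rcases x with a | a <;>
          simp [Matrix.mul_apply, threeLevelB, theM, e, hij]
  have h2 : eᵀ * e = ((Qij i j)ᵀ * e)ᵀ * ((Qij i j)ᵀ * e) := by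
    rw [Matrix.transpose_mul, Matrix.transpose_transpose, Matrix.mul_assoc,
      ← Matrix.mul_assoc (Qij i j), hQij', Matrix.one_mul]
  rw [h2, h1, Matrix.transpose_fromRows, Matrix.fromCols_mul_fromRows]

end ThreeLevelAux
end Aux3
section Aux4
namespace ThreeLevelAux

open Matrix

variable {p q₁ q₂ m t : ℕ} {n : Fin m → ℕ} {k : (i : Fin m) → Fin (n i) → ℕ} {s : Fin m → ℕ}

variable {Qij : (i : Fin m) → (j : Fin (n i)) →
      Matrix (Fin q₂ ⊕ Fin (k i j)) (Fin q₂ ⊕ Fin (k i j)) ℝ}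
    {B1 : (i : Fin m) → (j : Fin (n i)) → Matrix (Fin q₂ ⊕ Fin (k i j)) (Fin p) ℝ}
    {B2 : (i : Fin m) → (j : Fin (n i)) → Matrix (Fin q₂ ⊕ Fin (k i j)) (Fin q₁) ℝ}
    {B3 : (i : Fin m) → (j : Fin (n i)) → Matrix (Fin q₂ ⊕ Fin (k i j)) (Fin q₂) ℝ}
    {Qi : (i : Fin m) → Matrix ((j : Fin (n i)) × Fin (k i j)) (Fin q₁ ⊕ Fin (s i)) ℝ}
    {Q : Matrix ((i : Fin m) × Fin (s i)) (Fin p ⊕ Fin t) ℝ}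
    {R : Matrix (Fin p) (Fin p) ℝ}
    {Ri : (i : Fin m) → Matrix (Fin q₁) (Fin q₁) ℝ}
    {Rij : (i : Fin m) → (j : Fin (n i)) → Matrix (Fin q₂) (Fin q₂) ℝ}

/-- stack of `fRow` over `j`. -/
def fStack (Qij : (i : Fin m) → (j : Fin (n i)) →
      Matrix (Fin q₂ ⊕ Fin (k i j)) (Fin q₂ ⊕ Fin (k i j)) ℝ)
    (B1 : (i : Fin m) → (j : Fin (n i)) → Matrix (Fin q₂ ⊕ Fin (k i j)) (Fin p) ℝ)
    (B2 : (i : Fin m) → (j : Fin (n i)) → Matrix (Fin q₂ ⊕ Fin (k i j)) (Fin q₁) ℝ)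
    (i : Fin m) : Matrix ((j : Fin (n i)) × Fin (k i j)) (Idx p q₁ q₂ m n) ℝ :=
  Matrix.of fun x y => fRow Qij B1 B2 i x.1 x.2 y

/-- stack of `gRow` over `i`. -/
def gStack (Qi : (i : Fin m) → Matrix ((j : Fin (n i)) × Fin (k i j)) (Fin q₁ ⊕ Fin (s i)) ℝ)
    (Qij : (i : Fin m) → (j : Fin (n i)) →
      Matrix (Fin q₂ ⊕ Fin (k i j)) (Fin q₂ ⊕ Fin (k i j)) ℝ)
    (B1 : (i : Fin m) → (j : Fin (n i)) → Matrix (Fin q₂ ⊕ Fin (k i j)) (Fin p) ℝ) :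
    Matrix ((i : Fin m) × Fin (s i)) (Idx p q₁ q₂ m n) ℝ :=
  Matrix.of fun x y => gRow Qi Qij B1 x.1 x.2 y

lemma sum_fRow (i : Fin m) :
    ∑ j, (fRow Qij B1 B2 i j)ᵀ * fRow Qij B1 B2 i j =
      (fStack Qij B1 B2 i)ᵀ * fStack Qij B1 B2 i := by
  ext y z
  rw [Matrix.sum_apply]
  rw [Matrix.mul_apply, ← Finset.univ_sigma_univ, Finset.sum_sigma]
  simp [Matrix.mul_apply, fStack]

lemma sum_gRow :
    ∑ i, (gRow Qi Qij B1 i)ᵀ * gRow Qi Qij B1 i =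
      (gStack Qi Qij B1)ᵀ * gStack Qi Qij B1 := by
  ext y z
  rw [Matrix.sum_apply]
  rw [Matrix.mul_apply, ← Finset.univ_sigma_univ, Finset.sum_sigma]
  simp [Matrix.mul_apply, gStack]

lemma factB (hQi : ∀ i, (Qi i)ᵀ * Qi i = 1) (hQi' : ∀ i, Qi i * (Qi i)ᵀ = 1)
    (hQRi : ∀ i, stackD2 Qij B2 i = Qi i * Matrix.fromRows (Ri i) 0) (i : Fin m) :
    ∑ j, (fRow Qij B1 B2 i j)ᵀ * fRow Qij B1 B2 i j =
    ((theM Qi Qij B1 B2 R Ri Rij).submatrix (fun a => Sum.inr ⟨i, Sum.inl a⟩) id)ᵀ *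
      (theM Qi Qij B1 B2 R Ri Rij).submatrix (fun a => Sum.inr ⟨i, Sum.inl a⟩) id +
    (gRow Qi Qij B1 i)ᵀ * gRow Qi Qij B1 i := by
  rw [sum_fRow]
  have hmid : (Qi i)ᵀ * stackD2 Qij B2 i = Matrix.fromRows (Ri i) 0 := by
    rw [hQRi]
    calc _ = ((Qi i)ᵀ * Qi i) * Matrix.fromRows (Ri i) 0 := (Matrix.mul_assoc _ _ _).symm
      _ = _ := by rw [hQi]; exact Matrix.one_mul _
  have h1 : (Qi i)ᵀ * fStack Qij B1 B2 i = Matrix.fromRows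
      ((theM Qi Qij B1 B2 R Ri Rij).submatrix (fun a => Sum.inr ⟨i, Sum.inl a⟩) id)
      (gRow Qi Qij B1 i) := by
    ext x y
    rcases y with b | ⟨i', b | ⟨j', b⟩⟩
    · rcases x with a | a <;>
        simp [Matrix.mul_apply, fStack, theM, C1, C2, C0, stackD2]
    · by_cases hii : i = i'
      · subst hii
        rcases x with a | a
        · have hm := congrFun (congrFun hmid (Sum.inl a)) b
          simp only [Matrix.mul_apply, Matrix.transpose_apply,
            Matrix.fromRows_apply_inl, stackD2, Matrix.of_apply] at hm
          simp [Matrix.mul_apply, fStack, theM, hm]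
        · have hm := congrFun (congrFun hmid (Sum.inr a)) b
          simp only [Matrix.mul_apply, Matrix.transpose_apply,
            Matrix.fromRows_apply_inr, stackD2, Matrix.of_apply] at hm
          simp [Matrix.mul_apply, fStack, theM, hm]
      · rcases x with a | a <;>
          simp [Matrix.mul_apply, fStack, theM, hii]
    · rcases x with a | a <;>
        simp [Matrix.mul_apply, fStack, theM]
  have h2 : (fStack Qij B1 B2 i)ᵀ * fStack Qij B1 B2 i =
      ((Qi i)ᵀ * fStack Qij B1 B2 i)ᵀ * ((Qi i)ᵀ * fStack Qij B1 B2 i) := by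
    rw [Matrix.transpose_mul, Matrix.transpose_transpose, Matrix.mul_assoc,
      ← Matrix.mul_assoc (Qi i), hQi', Matrix.one_mul]
  rw [h2, h1, Matrix.transpose_fromRows, Matrix.fromCols_mul_fromRows]

lemma factC (hQ : Qᵀ * Q = 1) (hQ' : Q * Qᵀ = 1)
    (hQR : stackC2 Qi Qij B1 = Q * Matrix.fromRows R 0) :
    ∑ i, (gRow Qi Qij B1 i)ᵀ * gRow Qi Qij B1 i =
    ((theM Qi Qij B1 B2 R Ri Rij).submatrix Sum.inl id)ᵀ *
      (theM Qi Qij B1 B2 R Ri Rij).submatrix Sum.inl id := by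
  rw [sum_gRow]
  have hmid : Qᵀ * stackC2 Qi Qij B1 = Matrix.fromRows R 0 := by
    rw [hQR]
    calc _ = (Qᵀ * Q) * Matrix.fromRows R 0 := (Matrix.mul_assoc _ _ _).symm
      _ = _ := by rw [hQ]; exact Matrix.one_mul _
  have h1 : Qᵀ * gStack Qi Qij B1 = Matrix.fromRows
      ((theM Qi Qij B1 B2 R Ri Rij).submatrix Sum.inl id)
      (0 : Matrix (Fin t) (Idx p q₁ q₂ m n) ℝ) := by
    ext x y
    rcases y with b | y
    · rcases x with a | a
      · have hm := congrFun (congrFun hmid (Sum.inl a)) b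
        simp only [Matrix.mul_apply, Matrix.transpose_apply,
          Matrix.fromRows_apply_inl, stackC2, Matrix.of_apply] at hm
        simp [Matrix.mul_apply, gStack, theM, hm]
      · have hm := congrFun (congrFun hmid (Sum.inr a)) b
        simp only [Matrix.mul_apply, Matrix.transpose_apply,
          Matrix.fromRows_apply_inr, stackC2, Matrix.of_apply] at hm
        simp [Matrix.mul_apply, gStack, theM, hm]
    · rcases x with a | a <;>
        simp [Matrix.mul_apply, gStack, theM]
  have h2 : (gStack Qi Qij B1)ᵀ * gStack Qi Qij B1 =
      (Qᵀ * gStack Qi Qij B1)ᵀ * (Qᵀ * gStack Qi Qij B1) := by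
    rw [Matrix.transpose_mul, Matrix.transpose_transpose, Matrix.mul_assoc,
      ← Matrix.mul_assoc Q, hQ', Matrix.one_mul]
  rw [h2, h1, Matrix.transpose_fromRows, Matrix.fromCols_mul_fromRows]
  simp

end ThreeLevelAux
end Aux4
section Aux5
namespace ThreeLevelAux

open Matrix

variable {p q₁ q₂ m t : ℕ} {n : Fin m → ℕ} {k : (i : Fin m) → Fin (n i) → ℕ} {s : Fin m → ℕ}

variable {Qij : (i : Fin m) → (j : Fin (n i)) →
      Matrix (Fin q₂ ⊕ Fin (k i j)) (Fin q₂ ⊕ Fin (k i j)) ℝ}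
    {B1 : (i : Fin m) → (j : Fin (n i)) → Matrix (Fin q₂ ⊕ Fin (k i j)) (Fin p) ℝ}
    {B2 : (i : Fin m) → (j : Fin (n i)) → Matrix (Fin q₂ ⊕ Fin (k i j)) (Fin q₁) ℝ}
    {B3 : (i : Fin m) → (j : Fin (n i)) → Matrix (Fin q₂ ⊕ Fin (k i j)) (Fin q₂) ℝ}
    {Qi : (i : Fin m) → Matrix ((j : Fin (n i)) × Fin (k i j)) (Fin q₁ ⊕ Fin (s i)) ℝ}
    {Q : Matrix ((i : Fin m) × Fin (s i)) (Fin p ⊕ Fin t) ℝ}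
    {R : Matrix (Fin p) (Fin p) ℝ}
    {Ri : (i : Fin m) → Matrix (Fin q₁) (Fin q₁) ℝ}
    {Rij : (i : Fin m) → (j : Fin (n i)) → Matrix (Fin q₂) (Fin q₂) ℝ}

lemma asmB : (threeLevelB B1 B2 B3)ᵀ * threeLevelB B1 B2 B3 =
    ∑ i, ∑ j,
      ((threeLevelB B1 B2 B3).submatrix
          (fun x => (⟨i, ⟨j, x⟩⟩ : (i : Fin m) × ((j : Fin (n i)) × (Fin q₂ ⊕ Fin (k i j))))) id)ᵀ *
        (threeLevelB B1 B2 B3).submatrix (fun x => ⟨i, ⟨j, x⟩⟩) id := by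
  ext y z
  rw [Matrix.mul_apply, ← Finset.univ_sigma_univ, Finset.sum_sigma, Matrix.sum_apply]
  refine Finset.sum_congr rfl fun i _ => ?_
  rw [← Finset.univ_sigma_univ, Finset.sum_sigma, Matrix.sum_apply]
  refine Finset.sum_congr rfl fun j _ => ?_
  rw [Matrix.mul_apply]
  simp

lemma asmM : (theM Qi Qij B1 B2 R Ri Rij)ᵀ * theM Qi Qij B1 B2 R Ri Rij =
    ((theM Qi Qij B1 B2 R Ri Rij).submatrix Sum.inl id)ᵀ *
        (theM Qi Qij B1 B2 R Ri Rij).submatrix Sum.inl id +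
      ∑ i, (((theM Qi Qij B1 B2 R Ri Rij).submatrix (fun a => Sum.inr ⟨i, Sum.inl a⟩) id)ᵀ *
          (theM Qi Qij B1 B2 R Ri Rij).submatrix (fun a => Sum.inr ⟨i, Sum.inl a⟩) id +
        ∑ j, ((theM Qi Qij B1 B2 R Ri Rij).submatrix (fun a => Sum.inr ⟨i, Sum.inr (j, a)⟩) id)ᵀ *
          (theM Qi Qij B1 B2 R Ri Rij).submatrix (fun a => Sum.inr ⟨i, Sum.inr (j, a)⟩) id) := by
  ext y z
  rw [Matrix.mul_apply, Fintype.sum_sum_type, ← Finset.univ_sigma_univ, Finset.sum_sigma]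
  simp only [Matrix.add_apply, Matrix.sum_apply, Matrix.mul_apply, Matrix.transpose_apply,
    Matrix.submatrix_apply, id_eq]
  congr 1
  refine Finset.sum_congr rfl fun i _ => ?_
  rw [Fintype.sum_sum_type]
  congr 1
  rw [Fintype.sum_prod_type]

lemma MtM_eq (hQij : ∀ i j, (Qij i j)ᵀ * Qij i j = 1)
    (hQij' : ∀ i j, Qij i j * (Qij i j)ᵀ = 1)
    (hQRij : ∀ i j, B3 i j = Qij i j * Matrix.fromRows (Rij i j) 0)
    (hQi : ∀ i, (Qi i)ᵀ * Qi i = 1) (hQi' : ∀ i, Qi i * (Qi i)ᵀ = 1)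
    (hQRi : ∀ i, stackD2 Qij B2 i = Qi i * Matrix.fromRows (Ri i) 0)
    (hQ : Qᵀ * Q = 1) (hQ' : Q * Qᵀ = 1)
    (hQR : stackC2 Qi Qij B1 = Q * Matrix.fromRows R 0) :
    (theM Qi Qij B1 B2 R Ri Rij)ᵀ * theM Qi Qij B1 B2 R Ri Rij =
      (threeLevelB B1 B2 B3)ᵀ * threeLevelB B1 B2 B3 := by
  rw [asmB (B3 := B3), asmM,
    ← factC (B2 := B2) (Ri := Ri) (Rij := Rij) hQ hQ' hQR, ← Finset.sum_add_distrib]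
  refine Finset.sum_congr rfl fun i _ => ?_
  have hb := factB (B1 := B1) (R := R) (Rij := Rij) hQi hQi' hQRi i
  have ha : ∀ j, ((threeLevelB B1 B2 B3).submatrix
          (fun x => (⟨i, ⟨j, x⟩⟩ : (i : Fin m) × ((j : Fin (n i)) × (Fin q₂ ⊕ Fin (k i j))))) id)ᵀ *
        (threeLevelB B1 B2 B3).submatrix (fun x => ⟨i, ⟨j, x⟩⟩) id =
      ((theM Qi Qij B1 B2 R Ri Rij).submatrix (fun a => Sum.inr ⟨i, Sum.inr (j, a)⟩) id)ᵀ *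
        (theM Qi Qij B1 B2 R Ri Rij).submatrix (fun a => Sum.inr ⟨i, Sum.inr (j, a)⟩) id +
      (fRow Qij B1 B2 i j)ᵀ * fRow Qij B1 B2 i j :=
    factA (Qi := Qi) (R := R) (Ri := Ri) hQij hQij' hQRij i
  calc (gRow Qi Qij B1 i)ᵀ * gRow Qi Qij B1 i +
        (((theM Qi Qij B1 B2 R Ri Rij).submatrix (fun a => Sum.inr ⟨i, Sum.inl a⟩) id)ᵀ *
          (theM Qi Qij B1 B2 R Ri Rij).submatrix (fun a => Sum.inr ⟨i, Sum.inl a⟩) id +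
        ∑ j, ((theM Qi Qij B1 B2 R Ri Rij).submatrix (fun a => Sum.inr ⟨i, Sum.inr (j, a)⟩) id)ᵀ *
          (theM Qi Qij B1 B2 R Ri Rij).submatrix (fun a => Sum.inr ⟨i, Sum.inr (j, a)⟩) id)
      = (∑ j, (fRow Qij B1 B2 i j)ᵀ * fRow Qij B1 B2 i j) +
        ∑ j, ((theM Qi Qij B1 B2 R Ri Rij).submatrix (fun a => Sum.inr ⟨i, Sum.inr (j, a)⟩) id)ᵀ *
          (theM Qi Qij B1 B2 R Ri Rij).submatrix (fun a => Sum.inr ⟨i, Sum.inr (j, a)⟩) id := by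
        rw [hb]; abel
    _ = _ := by
        rw [← Finset.sum_add_distrib]
        exact (Finset.sum_congr rfl fun j _ => by rw [ha j]; abel).symm

end ThreeLevelAux
end Aux5
open ThreeLevelAux in
theorem threeLevelLS_inverse_level2_blocks {p q₁ q₂ m t : ℕ} {n : Fin m → ℕ}
    {k : (i : Fin m) → Fin (n i) → ℕ} {s : Fin m → ℕ}
    (hp : 0 < p) (hq₁ : 0 < q₁) (hq₂ : 0 < q₂) (hm : 0 < m) (hn : ∀ i, 0 < n i)
    (B1 : (i : Fin m) → (j : Fin (n i)) → Matrix (Fin q₂ ⊕ Fin (k i j)) (Fin p) ℝ)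
    (B2 : (i : Fin m) → (j : Fin (n i)) → Matrix (Fin q₂ ⊕ Fin (k i j)) (Fin q₁) ℝ)
    (B3 : (i : Fin m) → (j : Fin (n i)) → Matrix (Fin q₂ ⊕ Fin (k i j)) (Fin q₂) ℝ)
    (hrank : (threeLevelB B1 B2 B3).rank =
      Fintype.card (Fin p ⊕ (Σ i : Fin m, Fin q₁ ⊕ (Fin (n i) × Fin q₂))))
    (Qij : (i : Fin m) → (j : Fin (n i)) →
      Matrix (Fin q₂ ⊕ Fin (k i j)) (Fin q₂ ⊕ Fin (k i j)) ℝ)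
    (hQij : ∀ i j, (Qij i j)ᵀ * Qij i j = 1) (hQij' : ∀ i j, Qij i j * (Qij i j)ᵀ = 1)
    (Rij : (i : Fin m) → (j : Fin (n i)) → Matrix (Fin q₂) (Fin q₂) ℝ)
    (hRijtri : ∀ i j, (Rij i j).BlockTriangular id)
    (hRij : ∀ i j, IsUnit (Rij i j).det)
    (hQRij : ∀ i j, B3 i j = Qij i j * Matrix.fromRows (Rij i j) 0)
    (Qi : (i : Fin m) → Matrix ((j : Fin (n i)) × Fin (k i j)) (Fin q₁ ⊕ Fin (s i)) ℝ)
    (hQi : ∀ i, (Qi i)ᵀ * Qi i = 1) (hQi' : ∀ i, Qi i * (Qi i)ᵀ = 1)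
    (Ri : (i : Fin m) → Matrix (Fin q₁) (Fin q₁) ℝ)
    (hRitri : ∀ i, (Ri i).BlockTriangular id)
    (hRi : ∀ i, IsUnit (Ri i).det)
    (hQRi : ∀ i, stackD2 Qij B2 i = Qi i * Matrix.fromRows (Ri i) 0)
    (Q : Matrix ((i : Fin m) × Fin (s i)) (Fin p ⊕ Fin t) ℝ)
    (hQ : Qᵀ * Q = 1) (hQ' : Q * Qᵀ = 1)
    (R : Matrix (Fin p) (Fin p) ℝ)
    (hRtri : R.BlockTriangular id) (hR : IsUnit R.det)
    (hQR : stackC2 Qi Qij B1 = Q * Matrix.fromRows R 0)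
    :
    ∀ i : Fin m,
      (((threeLevelB B1 B2 B3)ᵀ * threeLevelB B1 B2 B3)⁻¹).submatrix
          Sum.inl (fun b => Sum.inr ⟨i, Sum.inl b⟩) =
        -((((threeLevelB B1 B2 B3)ᵀ * threeLevelB B1 B2 B3)⁻¹).submatrix
            Sum.inl Sum.inl) * ((Ri i)⁻¹ * C1 Qi Qij B1 i)ᵀ ∧
      (((threeLevelB B1 B2 B3)ᵀ * threeLevelB B1 B2 B3)⁻¹).submatrix
          (fun a => Sum.inr ⟨i, Sum.inl a⟩) (fun b => Sum.inr ⟨i, Sum.inl b⟩) =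
        (Ri i)⁻¹ * (((Ri i)ᵀ)⁻¹ - C1 Qi Qij B1 i *
          (((threeLevelB B1 B2 B3)ᵀ * threeLevelB B1 B2 B3)⁻¹).submatrix
            Sum.inl (fun b => Sum.inr ⟨i, Sum.inl b⟩)) := by
  classical
  intro i
  set A := (threeLevelB B1 B2 B3)ᵀ * threeLevelB B1 B2 B3 with hA
  set M := theM Qi Qij B1 B2 R Ri Rij with hMdef
  have hMM : Mᵀ * M = A :=
    MtM_eq hQij hQij' hQRij hQi hQi' hQRi hQ hQ' hQR
  have hAunit : IsUnit A := by
    apply isUnit_of_rank_eq_card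
    rw [hA, Matrix.rank_transpose_mul_self]
    exact hrank
  have hAdet : IsUnit A.det := A.isUnit_iff_isUnit_det.mp hAunit
  have hMdet : IsUnit M.det := by
    have h := hAdet
    rw [← hMM, Matrix.det_mul, Matrix.det_transpose] at h
    exact isUnit_of_mul_isUnit_left h
  have hMTdet : IsUnit (Mᵀ).det := by rw [Matrix.det_transpose]; exact hMdet
  have hAsymm : Aᵀ = A := by rw [hA, Matrix.transpose_mul, Matrix.transpose_transpose]
  set X := A⁻¹ with hXdef
  have hXsymm : Xᵀ = X := by rw [hXdef, Matrix.transpose_nonsing_inv, hAsymm]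
  have hKey : M * X * Mᵀ = 1 := by
    rw [hXdef, ← hMM, Matrix.mul_inv_rev, ← Matrix.mul_assoc,
      Matrix.mul_nonsing_inv M hMdet, Matrix.one_mul,
      Matrix.nonsing_inv_mul (Mᵀ) hMTdet]
  set g2 : Fin q₁ → Idx p q₁ q₂ m n := fun b => Sum.inr ⟨i, Sum.inl b⟩ with hg2
  set C1i := C1 Qi Qij B1 i with hC1i
  have hblock : ∀ {β γ : Type} (f : β → Idx p q₁ q₂ m n) (g : γ → Idx p q₁ q₂ m n),
      M.submatrix f id * X * (M.submatrix g id)ᵀ =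
        (1 : Matrix (Idx p q₁ q₂ m n) (Idx p q₁ q₂ m n) ℝ).submatrix f g := by
    intro β γ f g
    rw [← hKey, Matrix.submatrix_mul (M * X) Mᵀ f id g Function.bijective_id,
      Matrix.submatrix_mul M X f id id Function.bijective_id, Matrix.submatrix_id_id,
      Matrix.transpose_submatrix]
  have hu1 : M.submatrix g2 id * X.submatrix id Sum.inl =
      C1i * X.submatrix Sum.inl Sum.inl + Ri i * X.submatrix g2 Sum.inl := by
    have h2 := u_mul (R := R) (C := C1 Qi Qij B1) (Ri := Ri) (D := D1 Qij B1)
      (Dr := D1 Qij B2) (Rij := Rij) i (X.submatrix id Sum.inl)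
    simpa [Matrix.submatrix_submatrix] using h2
  have hu2 : M.submatrix g2 id * X.submatrix id g2 =
      C1i * X.submatrix Sum.inl g2 + Ri i * X.submatrix g2 g2 := by
    have h2 := u_mul (R := R) (C := C1 Qi Qij B1) (Ri := Ri) (D := D1 Qij B1)
      (Dr := D1 Qij B2) (Rij := Rij) i (X.submatrix id g2)
    simpa [Matrix.submatrix_submatrix] using h2
  have e1 : X.submatrix Sum.inl id * (M.submatrix g2 id)ᵀ =
      (M.submatrix g2 id * X.submatrix id Sum.inl)ᵀ := by
    rw [Matrix.transpose_mul, Matrix.transpose_submatrix X id Sum.inl, hXsymm]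
  have e2 : X.submatrix g2 id * (M.submatrix g2 id)ᵀ =
      (M.submatrix g2 id * X.submatrix id g2)ᵀ := by
    rw [Matrix.transpose_mul, Matrix.transpose_submatrix X id g2, hXsymm]
  have hW : C1i * X.submatrix Sum.inl Sum.inl + Ri i * X.submatrix g2 Sum.inl = 0 := by
    have h0 : (1 : Matrix (Idx p q₁ q₂ m n) (Idx p q₁ q₂ m n) ℝ).submatrix Sum.inl g2 = 0 := by
      ext a b; simp [hg2, Matrix.one_apply]
    have hb := hblock Sum.inl g2
    rw [h0] at hb
    have hv : M.submatrix Sum.inl id * X = R * X.submatrix Sum.inl id :=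
      v_mul (R := R) (C := C1 Qi Qij B1) (Ri := Ri) (D := D1 Qij B1)
        (Dr := D1 Qij B2) (Rij := Rij) X
    rw [hv, Matrix.mul_assoc, e1, hu1] at hb
    have hb2 := congrArg (fun Z => R⁻¹ * Z) hb
    rw [← Matrix.mul_assoc, Matrix.nonsing_inv_mul R hR, Matrix.one_mul,
      Matrix.mul_zero] at hb2
    have hb3 := congrArg Matrix.transpose hb2
    simpa using hb3
  have hY11s : (X.submatrix Sum.inl Sum.inl)ᵀ = X.submatrix Sum.inl Sum.inl := by
    rw [Matrix.transpose_submatrix, hXsymm]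
  have hY21 : X.submatrix g2 Sum.inl =
      -((Ri i)⁻¹ * (C1i * X.submatrix Sum.inl Sum.inl)) := by
    have h' : Ri i * X.submatrix g2 Sum.inl = -(C1i * X.submatrix Sum.inl Sum.inl) :=
      eq_neg_of_add_eq_zero_right hW
    calc X.submatrix g2 Sum.inl = (Ri i)⁻¹ * (Ri i * X.submatrix g2 Sum.inl) := by
          rw [← Matrix.mul_assoc, Matrix.nonsing_inv_mul _ (hRi i), Matrix.one_mul]
      _ = _ := by rw [h', Matrix.mul_neg]
  have goal1 : X.submatrix Sum.inl g2 =
      -(X.submatrix Sum.inl Sum.inl) * ((Ri i)⁻¹ * C1i)ᵀ := by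
    have hY12 : X.submatrix Sum.inl g2 = (X.submatrix g2 Sum.inl)ᵀ := by
      rw [Matrix.transpose_submatrix, hXsymm]
    rw [hY12, hY21, Matrix.transpose_neg, Matrix.transpose_mul, Matrix.transpose_mul,
      hY11s, Matrix.neg_mul, Matrix.mul_assoc, Matrix.transpose_mul]
  refine ⟨goal1, ?_⟩
  have h1' : (1 : Matrix (Idx p q₁ q₂ m n) (Idx p q₁ q₂ m n) ℝ).submatrix g2 g2 = 1 := by
    ext a b
    simp [hg2, Matrix.one_apply]
  have hb := hblock g2 g2
  rw [h1'] at hb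
  have hu0 : M.submatrix g2 id * X =
      C1i * X.submatrix Sum.inl id + Ri i * X.submatrix g2 id := by
    have h2 := u_mul (R := R) (C := C1 Qi Qij B1) (Ri := Ri) (D := D1 Qij B1)
      (Dr := D1 Qij B2) (Rij := Rij) i X
    exact h2
  rw [hu0, Matrix.add_mul, Matrix.mul_assoc, Matrix.mul_assoc, e1, e2, hu1, hu2, hW] at hb
  rw [Matrix.transpose_zero, Matrix.mul_zero, zero_add] at hb
  have hZ : (Ri i)⁻¹ = (C1i * X.submatrix Sum.inl g2 + Ri i * X.submatrix g2 g2)ᵀ :=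
    Matrix.inv_eq_right_inv hb
  have hZ' : C1i * X.submatrix Sum.inl g2 + Ri i * X.submatrix g2 g2 = ((Ri i)ᵀ)⁻¹ := by
    have h3 := congrArg Matrix.transpose hZ
    rw [Matrix.transpose_transpose] at h3
    rw [← h3, Matrix.transpose_nonsing_inv]
  have h4 : Ri i * X.submatrix g2 g2 =
      ((Ri i)ᵀ)⁻¹ - C1i * X.submatrix Sum.inl g2 := eq_sub_of_add_eq' hZ'
  rw [← h4, ← Matrix.mul_assoc, Matrix.nonsing_inv_mul _ (hRi i), Matrix.one_mul]
end

section
/- In the three-level least squares setting with the given QR decompositions, for each 1 ≤ i ≤ m and 1 ≤ j ≤ nᵢ the sub-blocks of A⁻¹ satisfy A¹²ᶦʲ = −( Rᵢⱼ⁻¹ ( D₁ᵢⱼ A¹¹ + D̊₁ᵢⱼ (A¹²ᶦ)ᵀ ) )ᵀ, A¹²⁽ⁱ⁾⁽ʲ⁾ = −( Rᵢⱼ⁻¹ ( D₁ᵢⱼ A¹²ᶦ + D̊₁ᵢⱼ A²²ᶦ ) )ᵀ, and A²²ᶦʲ = Rᵢⱼ⁻¹ ( Rᵢⱼ⁻ᵀ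 − D₁ᵢⱼ A¹²ᶦʲ − D̊₁ᵢⱼ A¹²⁽ⁱ⁾⁽ʲ⁾ ). -/
open Matrix

open Matrix

section AuxSum

variable {p q₁ q₂ m : ℕ} {n : Fin m → ℕ} {k : (i : Fin m) → Fin (n i) → ℕ}

lemma aux_sum_row (i : Fin m) (j : Fin (n i))
    (c : (i' : Fin m) → (j' : Fin (n i')) → (Fin q₂ ⊕ Fin (k i' j')) → ℝ)
    (F : ((i' : Fin m) × ((j' : Fin (n i')) × (Fin q₂ ⊕ Fin (k i' j')))) → ℝ) :
    ∑ r : (i' : Fin m) × ((j' : Fin (n i')) × (Fin q₂ ⊕ Fin (k i' j'))),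
      (if (⟨r.1, r.2.1⟩ : Σ i, Fin (n i)) = ⟨i, j⟩ then c r.1 r.2.1 r.2.2 else 0) * F r
    = ∑ e, c i j e * F ⟨i, ⟨j, e⟩⟩ := by
  rw [← Finset.univ_sigma_univ, Finset.sum_sigma]
  rw [Finset.sum_eq_single i]
  · rw [← Finset.univ_sigma_univ, Finset.sum_sigma]
    rw [Finset.sum_eq_single j]
    · simp
    · intro j' _ hj'
      apply Finset.sum_eq_zero
      intro e _
      rw [if_neg, zero_mul]
      simp [hj']
    · simp
  · intro i' _ hi'
    apply Finset.sum_eq_zero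
    intro r _
    rw [if_neg, zero_mul]
    intro h
    exact hi' (congrArg Sigma.fst h)
  · simp

lemma aux_sum_col (B1v : Fin p → ℝ) (B2v : Fin q₁ → ℝ) (B3v : Fin q₂ → ℝ)
    (i : Fin m) (j : Fin (n i))
    (G : (Fin p ⊕ (Σ i' : Fin m, Fin q₁ ⊕ (Fin (n i') × Fin q₂))) → ℝ) :
    ∑ y : Fin p ⊕ (Σ i' : Fin m, Fin q₁ ⊕ (Fin (n i') × Fin q₂)),
      (match y with
       | Sum.inl a => B1v a
       | Sum.inr ⟨i', Sum.inl b⟩ => if i = i' then B2v b else 0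
       | Sum.inr ⟨i', Sum.inr (j', b)⟩ =>
           if (⟨i, j⟩ : Σ i, Fin (n i)) = ⟨i', j'⟩ then B3v b else 0) * G y
    = ∑ b, B1v b * G (Sum.inl b)
      + (∑ b, B2v b * G (Sum.inr ⟨i, Sum.inl b⟩)
        + ∑ b, B3v b * G (Sum.inr ⟨i, Sum.inr (j, b)⟩)) := by
  rw [Fintype.sum_sum_type]
  congr 1
  rw [← Finset.univ_sigma_univ, Finset.sum_sigma, Finset.sum_eq_single i]
  · rw [Fintype.sum_sum_type]
    congr 1
    · simp
    · rw [Fintype.sum_prod_type]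
      rw [Finset.sum_eq_single j]
      · simp
      · intro j' _ hj'
        apply Finset.sum_eq_zero
        intro b _
        have : (⟨i, j⟩ : Σ i, Fin (n i)) ≠ ⟨i, j'⟩ := by
          simp [hj'.symm]
        simp [this]
      · simp
  · intro i' _ hi'
    apply Finset.sum_eq_zero
    rintro (b | ⟨j', b⟩) _
    · simp [Ne.symm hi']
    · have : (⟨i, j⟩ : Σ i, Fin (n i)) ≠ ⟨i', j'⟩ := by
        intro h; exact hi' (congrArg Sigma.fst h).symm
      simp [this]
  · simp

end AuxSum
section Key
variable {p q₁ q₂ m : ℕ} {n : Fin m → ℕ} {k : (i : Fin m) → Fin (n i) → ℕ}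

lemma key_block_eq
    (B1 : (i : Fin m) → (j : Fin (n i)) → Matrix (Fin q₂ ⊕ Fin (k i j)) (Fin p) ℝ)
    (B2 : (i : Fin m) → (j : Fin (n i)) → Matrix (Fin q₂ ⊕ Fin (k i j)) (Fin q₁) ℝ)
    (B3 : (i : Fin m) → (j : Fin (n i)) → Matrix (Fin q₂ ⊕ Fin (k i j)) (Fin q₂) ℝ)
    (X : Matrix (Fin p ⊕ (Σ i : Fin m, Fin q₁ ⊕ (Fin (n i) × Fin q₂)))
                (Fin p ⊕ (Σ i : Fin m, Fin q₁ ⊕ (Fin (n i) × Fin q₂))) ℝ)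
    (hX : (threeLevelB B1 B2 B3)ᵀ * threeLevelB B1 B2 B3 * X = 1)
    (i : Fin m) (j : Fin (n i)) {γ : Type} [Fintype γ]
    (g : γ → (Fin p ⊕ (Σ i : Fin m, Fin q₁ ⊕ (Fin (n i) × Fin q₂)))) :
    (B3 i j)ᵀ * B1 i j * X.submatrix Sum.inl g
      + ((B3 i j)ᵀ * B2 i j * X.submatrix (fun a => Sum.inr ⟨i, Sum.inl a⟩) g
        + (B3 i j)ᵀ * B3 i j * X.submatrix (fun a => Sum.inr ⟨i, Sum.inr (j, a)⟩) g)
    = (1 : Matrix (Fin p ⊕ (Σ i : Fin m, Fin q₁ ⊕ (Fin (n i) × Fin q₂)))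
        (Fin p ⊕ (Σ i : Fin m, Fin q₁ ⊕ (Fin (n i) × Fin q₂))) ℝ).submatrix
      (fun a : Fin q₂ => Sum.inr ⟨i, Sum.inr (j, a)⟩) g := by
  have hX' : (threeLevelB B1 B2 B3)ᵀ * (threeLevelB B1 B2 B3 * X) = 1 := by
    rw [← Matrix.mul_assoc]; exact hX
  ext a c
  have h := congrFun (congrFun hX' (Sum.inr ⟨i, Sum.inr (j, a)⟩)) (g c)
  rw [Matrix.mul_apply] at h
  simp only [Matrix.transpose_apply] at h
  have hB : ∀ r : (i' : Fin m) × ((j' : Fin (n i')) × (Fin q₂ ⊕ Fin (k i' j'))),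
      threeLevelB B1 B2 B3 r (Sum.inr ⟨i, Sum.inr (j, a)⟩)
      = (if (⟨r.1, r.2.1⟩ : Σ i, Fin (n i)) = ⟨i, j⟩ then B3 r.1 r.2.1 r.2.2 a else 0) := by
    intro r; rfl
  simp only [hB] at h
  rw [aux_sum_row i j (fun i' j' e => B3 i' j' e a)
    (fun r => (threeLevelB B1 B2 B3 * X) r (g c))] at h
  have hBX : ∀ e : Fin q₂ ⊕ Fin (k i j),
      (threeLevelB B1 B2 B3 * X) ⟨i, ⟨j, e⟩⟩ (g c)
      = ∑ b, B1 i j e b * X (Sum.inl b) (g c)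
        + (∑ b, B2 i j e b * X (Sum.inr ⟨i, Sum.inl b⟩) (g c)
          + ∑ b, B3 i j e b * X (Sum.inr ⟨i, Sum.inr (j, b)⟩) (g c)) := by
    intro e
    rw [Matrix.mul_apply]
    rw [← aux_sum_col (B1 i j e) (B2 i j e) (B3 i j e) i j (fun y => X y (g c))]
    apply Finset.sum_congr rfl
    intro y _
    congr 1
  simp only [hBX] at h
  rw [Matrix.submatrix_apply, ← h]
  simp only [Matrix.add_apply, Matrix.mul_apply, Matrix.submatrix_apply,
    Matrix.transpose_apply, Finset.sum_mul, mul_add, Finset.mul_sum, mul_assoc,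
    Finset.sum_add_distrib]
  congr 1
  · rw [Finset.sum_comm]
  · congr 1
    · rw [Finset.sum_comm]
    · rw [Finset.sum_comm]

end Key

theorem threeLevelLS_inverse_level3_blocks {p q₁ q₂ m t : ℕ} {n : Fin m → ℕ}
    {k : (i : Fin m) → Fin (n i) → ℕ} {s : Fin m → ℕ}
    (hp : 0 < p) (hq₁ : 0 < q₁) (hq₂ : 0 < q₂) (hm : 0 < m) (hn : ∀ i, 0 < n i)
    (B1 : (i : Fin m) → (j : Fin (n i)) → Matrix (Fin q₂ ⊕ Fin (k i j)) (Fin p) ℝ)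
    (B2 : (i : Fin m) → (j : Fin (n i)) → Matrix (Fin q₂ ⊕ Fin (k i j)) (Fin q₁) ℝ)
    (B3 : (i : Fin m) → (j : Fin (n i)) → Matrix (Fin q₂ ⊕ Fin (k i j)) (Fin q₂) ℝ)
    (hrank : (threeLevelB B1 B2 B3).rank =
      Fintype.card (Fin p ⊕ (Σ i : Fin m, Fin q₁ ⊕ (Fin (n i) × Fin q₂))))
    (Qij : (i : Fin m) → (j : Fin (n i)) →
      Matrix (Fin q₂ ⊕ Fin (k i j)) (Fin q₂ ⊕ Fin (k i j)) ℝ)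
    (hQij : ∀ i j, (Qij i j)ᵀ * Qij i j = 1) (hQij' : ∀ i j, Qij i j * (Qij i j)ᵀ = 1)
    (Rij : (i : Fin m) → (j : Fin (n i)) → Matrix (Fin q₂) (Fin q₂) ℝ)
    (hRijtri : ∀ i j, (Rij i j).BlockTriangular id)
    (hRij : ∀ i j, IsUnit (Rij i j).det)
    (hQRij : ∀ i j, B3 i j = Qij i j * Matrix.fromRows (Rij i j) 0)
    (Qi : (i : Fin m) → Matrix ((j : Fin (n i)) × Fin (k i j)) (Fin q₁ ⊕ Fin (s i)) ℝ)
    (hQi : ∀ i, (Qi i)ᵀ * Qi i = 1) (hQi' : ∀ i, Qi i * (Qi i)ᵀ = 1)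
    (Ri : (i : Fin m) → Matrix (Fin q₁) (Fin q₁) ℝ)
    (hRitri : ∀ i, (Ri i).BlockTriangular id)
    (hRi : ∀ i, IsUnit (Ri i).det)
    (hQRi : ∀ i, stackD2 Qij B2 i = Qi i * Matrix.fromRows (Ri i) 0)
    (Q : Matrix ((i : Fin m) × Fin (s i)) (Fin p ⊕ Fin t) ℝ)
    (hQ : Qᵀ * Q = 1) (hQ' : Q * Qᵀ = 1)
    (R : Matrix (Fin p) (Fin p) ℝ)
    (hRtri : R.BlockTriangular id) (hR : IsUnit R.det)
    (hQR : stackC2 Qi Qij B1 = Q * Matrix.fromRows R 0)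
    :
    ∀ (i : Fin m) (j : Fin (n i)),
      (((threeLevelB B1 B2 B3)ᵀ * threeLevelB B1 B2 B3)⁻¹).submatrix
          Sum.inl (fun b => Sum.inr ⟨i, Sum.inr (j, b)⟩) =
        -((Rij i j)⁻¹ *
            (D1 Qij B1 i j *
              (((threeLevelB B1 B2 B3)ᵀ * threeLevelB B1 B2 B3)⁻¹).submatrix
                Sum.inl Sum.inl +
             D1 Qij B2 i j *
              ((((threeLevelB B1 B2 B3)ᵀ * threeLevelB B1 B2 B3)⁻¹).submatrix
                Sum.inl (fun b => Sum.inr ⟨i, Sum.inl b⟩))ᵀ))ᵀ ∧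
      (((threeLevelB B1 B2 B3)ᵀ * threeLevelB B1 B2 B3)⁻¹).submatrix
          (fun a => Sum.inr ⟨i, Sum.inl a⟩) (fun b => Sum.inr ⟨i, Sum.inr (j, b)⟩) =
        -((Rij i j)⁻¹ *
            (D1 Qij B1 i j *
              (((threeLevelB B1 B2 B3)ᵀ * threeLevelB B1 B2 B3)⁻¹).submatrix
                Sum.inl (fun b => Sum.inr ⟨i, Sum.inl b⟩) +
             D1 Qij B2 i j *
              (((threeLevelB B1 B2 B3)ᵀ * threeLevelB B1 B2 B3)⁻¹).submatrix
                (fun a => Sum.inr ⟨i, Sum.inl a⟩) (fun b => Sum.inr ⟨i, Sum.inl b⟩)))ᵀ ∧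
      (((threeLevelB B1 B2 B3)ᵀ * threeLevelB B1 B2 B3)⁻¹).submatrix
          (fun a => Sum.inr ⟨i, Sum.inr (j, a)⟩) (fun b => Sum.inr ⟨i, Sum.inr (j, b)⟩) =
        (Rij i j)⁻¹ *
          (((Rij i j)ᵀ)⁻¹
            - D1 Qij B1 i j *
              (((threeLevelB B1 B2 B3)ᵀ * threeLevelB B1 B2 B3)⁻¹).submatrix
                Sum.inl (fun b => Sum.inr ⟨i, Sum.inr (j, b)⟩)
            - D1 Qij B2 i j *
              (((threeLevelB B1 B2 B3)ᵀ * threeLevelB B1 B2 B3)⁻¹).submatrix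
                (fun a => Sum.inr ⟨i, Sum.inl a⟩) (fun b => Sum.inr ⟨i, Sum.inr (j, b)⟩)) := by
  intro i j
  set A := (threeLevelB B1 B2 B3)ᵀ * threeLevelB B1 B2 B3 with hAdef
  -- A is invertible
  have hA : IsUnit A.det := by
    rw [← Matrix.isUnit_iff_isUnit_det, ← Matrix.mulVec_surjective_iff_isUnit]
    have h1 : A.rank = Fintype.card (Fin p ⊕ (Σ i : Fin m, Fin q₁ ⊕ (Fin (n i) × Fin q₂))) := by
      rw [hAdef, Matrix.rank_transpose_mul_self]; exact hrank
    have htop : LinearMap.range A.mulVecLin = ⊤ := by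
      apply Submodule.eq_top_of_finrank_eq
      rw [Module.finrank_fintype_fun_eq_card]
      exact h1
    have hs : Function.Surjective A.mulVecLin := LinearMap.range_eq_top.mp htop
    intro v
    obtain ⟨w, hw⟩ := hs v
    exact ⟨w, by simpa [Matrix.mulVecLin_apply] using hw⟩
  have hAX : A * A⁻¹ = 1 := Matrix.mul_nonsing_inv _ hA
  have hsymA : Aᵀ = A := by
    rw [hAdef, Matrix.transpose_mul, Matrix.transpose_transpose]
  have hXsym : (A⁻¹)ᵀ = A⁻¹ := by rw [Matrix.transpose_nonsing_inv, hsymA]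
  have hswap : ∀ {α β : Type} (f : α → _) (g : β → _),
      (A⁻¹).submatrix f g = ((A⁻¹).submatrix g f)ᵀ := by
    intro α β f g
    ext a b
    simp only [Matrix.transpose_apply, Matrix.submatrix_apply]
    conv_lhs => rw [← hXsym]
    rw [Matrix.transpose_apply]
  -- block identities
  have hfr : ∀ {w : ℕ} (M : (i : Fin m) → (j : Fin (n i)) → Matrix (Fin q₂ ⊕ Fin (k i j)) (Fin w) ℝ),
      D0 Qij M i j = Matrix.fromRows (D1 Qij M i j) (D2 Qij M i j) := by
    intro w M
    ext x y
    cases x <;> rfl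
  have hT : ∀ {w : ℕ} (M : (i : Fin m) → (j : Fin (n i)) → Matrix (Fin q₂ ⊕ Fin (k i j)) (Fin w) ℝ),
      (B3 i j)ᵀ * M i j = (Rij i j)ᵀ * D1 Qij M i j := by
    intro w M
    have hq : B3 i j = Qij i j * (Matrix.fromRows (Rij i j) 0 : Matrix (Fin q₂ ⊕ Fin (k i j)) (Fin q₂) ℝ) := hQRij i j
    rw [hq, Matrix.transpose_mul, Matrix.transpose_fromRows, Matrix.mul_assoc]
    have hd : (Qij i j)ᵀ * M i j = D0 Qij M i j := rfl
    rw [hd, hfr M, Matrix.transpose_zero, Matrix.fromCols_mul_fromRows,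
      Matrix.zero_mul, add_zero]
  have hT3 : (B3 i j)ᵀ * B3 i j = (Rij i j)ᵀ * Rij i j := by
    have hq : B3 i j = Qij i j * (Matrix.fromRows (Rij i j) 0 : Matrix (Fin q₂ ⊕ Fin (k i j)) (Fin q₂) ℝ) := hQRij i j
    rw [hq, Matrix.transpose_mul, Matrix.transpose_fromRows, Matrix.mul_assoc,
      ← Matrix.mul_assoc ((Qij i j)ᵀ), hQij i j, Matrix.one_mul, Matrix.transpose_zero,
      Matrix.fromCols_mul_fromRows, Matrix.zero_mul, add_zero]
  have hRT : IsUnit ((Rij i j)ᵀ).det := by rw [Matrix.det_transpose]; exact hRij i j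
  -- solving the block equation
  have solve : ∀ {γ : Type} [Fintype γ] (X1 : Matrix (Fin p) γ ℝ) (X2 : Matrix (Fin q₁) γ ℝ)
      (X3 E : Matrix (Fin q₂) γ ℝ),
      (Rij i j)ᵀ * D1 Qij B1 i j * X1 + ((Rij i j)ᵀ * D1 Qij B2 i j * X2
        + (Rij i j)ᵀ * Rij i j * X3) = E →
      X3 = (Rij i j)⁻¹ * (((Rij i j)ᵀ)⁻¹ * E - D1 Qij B1 i j * X1 - D1 Qij B2 i j * X2) := by
    intro γ _ X1 X2 X3 E hE
    have h1 : (Rij i j)ᵀ * (D1 Qij B1 i j * X1 + (D1 Qij B2 i j * X2 + Rij i j * X3)) = E := by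
      rw [Matrix.mul_add, Matrix.mul_add, ← Matrix.mul_assoc, ← Matrix.mul_assoc,
        ← Matrix.mul_assoc]
      exact hE
    have h2 : D1 Qij B1 i j * X1 + (D1 Qij B2 i j * X2 + Rij i j * X3)
        = ((Rij i j)ᵀ)⁻¹ * E := by
      rw [← h1, ← Matrix.mul_assoc, Matrix.nonsing_inv_mul _ hRT, Matrix.one_mul]
    have h3 : Rij i j * X3
        = ((Rij i j)ᵀ)⁻¹ * E - D1 Qij B1 i j * X1 - D1 Qij B2 i j * X2 := by
      rw [← h2]; abel
    rw [← h3, ← Matrix.mul_assoc, Matrix.nonsing_inv_mul _ (hRij i j), Matrix.one_mul]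
  -- the three key equations
  have k1 := key_block_eq B1 B2 B3 (A⁻¹) hAX i j (Sum.inl : Fin p → _)
  have k2 := key_block_eq B1 B2 B3 (A⁻¹) hAX i j
    (fun b : Fin q₁ => (Sum.inr ⟨i, Sum.inl b⟩ : Fin p ⊕ (Σ i : Fin m, Fin q₁ ⊕ (Fin (n i) × Fin q₂))))
  have k3 := key_block_eq B1 B2 B3 (A⁻¹) hAX i j
    (fun b : Fin q₂ => (Sum.inr ⟨i, Sum.inr (j, b)⟩ : Fin p ⊕ (Σ i : Fin m, Fin q₁ ⊕ (Fin (n i) × Fin q₂))))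
  rw [hT B1, hT B2, hT3] at k1 k2 k3
  have hE1 : (1 : Matrix (Fin p ⊕ (Σ i : Fin m, Fin q₁ ⊕ (Fin (n i) × Fin q₂)))
        (Fin p ⊕ (Σ i : Fin m, Fin q₁ ⊕ (Fin (n i) × Fin q₂))) ℝ).submatrix
      (fun a : Fin q₂ => Sum.inr ⟨i, Sum.inr (j, a)⟩) (Sum.inl : Fin p → _) = 0 := by
    ext a b
    simp [Matrix.one_apply]
  have hE2 : (1 : Matrix (Fin p ⊕ (Σ i : Fin m, Fin q₁ ⊕ (Fin (n i) × Fin q₂)))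
        (Fin p ⊕ (Σ i : Fin m, Fin q₁ ⊕ (Fin (n i) × Fin q₂))) ℝ).submatrix
      (fun a : Fin q₂ => Sum.inr ⟨i, Sum.inr (j, a)⟩)
      (fun b : Fin q₁ => Sum.inr ⟨i, Sum.inl b⟩) = 0 := by
    ext a b
    simp [Matrix.one_apply]
  have hE3 : (1 : Matrix (Fin p ⊕ (Σ i : Fin m, Fin q₁ ⊕ (Fin (n i) × Fin q₂)))
        (Fin p ⊕ (Σ i : Fin m, Fin q₁ ⊕ (Fin (n i) × Fin q₂))) ℝ).submatrix
      (fun a : Fin q₂ => Sum.inr ⟨i, Sum.inr (j, a)⟩)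
      (fun b : Fin q₂ => Sum.inr ⟨i, Sum.inr (j, b)⟩) = 1 := by
    apply Matrix.submatrix_one
    intro x y h
    simpa using h
  rw [hE1] at k1
  rw [hE2] at k2
  rw [hE3] at k3
  have s1 := solve _ _ _ _ k1
  have s2 := solve _ _ _ _ k2
  have s3 := solve _ _ _ _ k3
  refine ⟨?_, ?_, ?_⟩
  · rw [hswap, s1, hswap (fun a : Fin q₁ => Sum.inr ⟨i, Sum.inl a⟩) Sum.inl]
    rw [Matrix.mul_zero, zero_sub, sub_eq_add_neg, ← neg_add, Matrix.mul_neg,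
      Matrix.transpose_neg]
  · rw [hswap, s2, hswap (fun a : Fin q₁ => Sum.inr ⟨i, Sum.inl a⟩)
      (fun b : Fin q₁ => Sum.inr ⟨i, Sum.inl b⟩)]
    rw [Matrix.mul_zero, zero_sub, sub_eq_add_neg, ← neg_add, Matrix.mul_neg,
      Matrix.transpose_neg]
  · rw [s3, Matrix.mul_one]
end

section
/- In the three-level least squares setting with the given QR decompositions, if x satisfies A x = Bᵀ b, where x is partitioned into a p-block x₁, q₁-blocks x₂,ᵢ and q₂-blocks x₂,ᵢⱼ, then x₁ = R⁻¹ c, x₂,ᵢ = Rᵢ⁻¹ (c₁ᵢ − C₁ᵢ x₁) for all 1 ≤ i ≤ m, and x₂,ᵢⱼ = Rᵢⱼ⁻¹ (d₁ᵢⱼ − D₁ᵢⱼ x₁ − D̊₁ᵢⱼ x₂,ᵢ) for all 1 ≤ i ≤ m, 1 ≤ j ≤ nᵢ. -/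
open Matrix

section Helpers
variable {p q₁ q₂ m : ℕ} {n : Fin m → ℕ} {k : (i : Fin m) → Fin (n i) → ℕ}

lemma rowFormula
    (B1 : (i : Fin m) → (j : Fin (n i)) → Matrix (Fin q₂ ⊕ Fin (k i j)) (Fin p) ℝ)
    (B2 : (i : Fin m) → (j : Fin (n i)) → Matrix (Fin q₂ ⊕ Fin (k i j)) (Fin q₁) ℝ)
    (B3 : (i : Fin m) → (j : Fin (n i)) → Matrix (Fin q₂ ⊕ Fin (k i j)) (Fin q₂) ℝ)
    (x : (Fin p ⊕ (Σ i : Fin m, Fin q₁ ⊕ (Fin (n i) × Fin q₂))) → ℝ)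
    (i : Fin m) (j : Fin (n i)) (a : Fin q₂ ⊕ Fin (k i j)) :
    (threeLevelB B1 B2 B3).mulVec x ⟨i, j, a⟩ =
      (B1 i j).mulVec (x ∘ Sum.inl) a
      + (B2 i j).mulVec (fun c => x (Sum.inr ⟨i, Sum.inl c⟩)) a
      + (B3 i j).mulVec (fun c => x (Sum.inr ⟨i, Sum.inr (j, c)⟩)) a := by
  simp only [Matrix.mulVec, dotProduct, threeLevelB, Matrix.of_apply,
    Fintype.sum_sum_type, ← Finset.univ_sigma_univ, Finset.sum_sigma,
    Fintype.sum_sum_type, Fintype.sum_prod_type, ite_mul, zero_mul,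
    Finset.sum_add_distrib, Finset.sum_ite_irrel, Finset.sum_const_zero,
    Finset.sum_ite_eq, Finset.mem_univ, if_true]
  rw [Finset.sum_sigma']
  simp only [Finset.univ_sigma_univ, Sigma.eta, Finset.sum_ite_eq, Finset.mem_univ, if_true]
  rw [← add_assoc]; rfl

lemma colFormula1
    (B1 : (i : Fin m) → (j : Fin (n i)) → Matrix (Fin q₂ ⊕ Fin (k i j)) (Fin p) ℝ)
    (B2 : (i : Fin m) → (j : Fin (n i)) → Matrix (Fin q₂ ⊕ Fin (k i j)) (Fin q₁) ℝ)
    (B3 : (i : Fin m) → (j : Fin (n i)) → Matrix (Fin q₂ ⊕ Fin (k i j)) (Fin q₂) ℝ)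
    (w : ((i : Fin m) × ((j : Fin (n i)) × (Fin q₂ ⊕ Fin (k i j)))) → ℝ) (a : Fin p) :
    (threeLevelB B1 B2 B3)ᵀ.mulVec w (Sum.inl a) =
      ∑ i, ∑ j, (B1 i j)ᵀ.mulVec (fun u => w ⟨i, j, u⟩) a := by
  simp only [Matrix.mulVec, dotProduct, Matrix.transpose_apply, threeLevelB, Matrix.of_apply,
    ← Finset.univ_sigma_univ, Finset.sum_sigma]

lemma colFormula2
    (B1 : (i : Fin m) → (j : Fin (n i)) → Matrix (Fin q₂ ⊕ Fin (k i j)) (Fin p) ℝ)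
    (B2 : (i : Fin m) → (j : Fin (n i)) → Matrix (Fin q₂ ⊕ Fin (k i j)) (Fin q₁) ℝ)
    (B3 : (i : Fin m) → (j : Fin (n i)) → Matrix (Fin q₂ ⊕ Fin (k i j)) (Fin q₂) ℝ)
    (w : ((i : Fin m) × ((j : Fin (n i)) × (Fin q₂ ⊕ Fin (k i j)))) → ℝ)
    (i : Fin m) (c : Fin q₁) :
    (threeLevelB B1 B2 B3)ᵀ.mulVec w (Sum.inr ⟨i, Sum.inl c⟩) =
      ∑ j, (B2 i j)ᵀ.mulVec (fun u => w ⟨i, j, u⟩) c := by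
  simp only [Matrix.mulVec, dotProduct, Matrix.transpose_apply, threeLevelB, Matrix.of_apply,
    ← Finset.univ_sigma_univ, Finset.sum_sigma, ite_mul, zero_mul, Finset.sum_ite_irrel,
    Finset.sum_const_zero, Finset.sum_ite_eq', Finset.mem_univ, if_true]

lemma colFormula3
    (B1 : (i : Fin m) → (j : Fin (n i)) → Matrix (Fin q₂ ⊕ Fin (k i j)) (Fin p) ℝ)
    (B2 : (i : Fin m) → (j : Fin (n i)) → Matrix (Fin q₂ ⊕ Fin (k i j)) (Fin q₁) ℝ)
    (B3 : (i : Fin m) → (j : Fin (n i)) → Matrix (Fin q₂ ⊕ Fin (k i j)) (Fin q₂) ℝ)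
    (w : ((i : Fin m) × ((j : Fin (n i)) × (Fin q₂ ⊕ Fin (k i j)))) → ℝ)
    (i : Fin m) (j : Fin (n i)) (c : Fin q₂) :
    (threeLevelB B1 B2 B3)ᵀ.mulVec w (Sum.inr ⟨i, Sum.inr (j, c)⟩) =
      (B3 i j)ᵀ.mulVec (fun u => w ⟨i, j, u⟩) c := by
  simp only [Matrix.mulVec, dotProduct, Matrix.transpose_apply, threeLevelB, Matrix.of_apply,
    ← Finset.univ_sigma_univ, Finset.sum_sigma, ite_mul, zero_mul, Finset.sum_ite_irrel,
    Finset.sum_const_zero]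
  rw [Finset.sum_sigma']
  simp only [Finset.univ_sigma_univ, Sigma.eta, Finset.sum_ite_eq', Finset.mem_univ, if_true]

lemma solve_mulVec {N : ℕ} {R : Matrix (Fin N) (Fin N) ℝ} (hR : IsUnit R.det)
    {v w : Fin N → ℝ} (h : R.mulVec v = w) : v = R⁻¹.mulVec w := by
  rw [← h, Matrix.mulVec_mulVec, Matrix.nonsing_inv_mul _ hR, Matrix.one_mulVec]

lemma eq_zero_of_transpose_mulVec {N : ℕ} {R : Matrix (Fin N) (Fin N) ℝ} (hR : IsUnit R.det)
    {v : Fin N → ℝ} (h : Rᵀ.mulVec v = 0) : v = 0 := by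
  have := solve_mulVec (by simpa using hR) h
  simpa using this

lemma transpose_mulVec_split {α β γ : Type*} [Fintype α] [Fintype β] [Fintype γ]
    (M : Matrix (α ⊕ β) γ ℝ) (v : (α ⊕ β) → ℝ) (c : γ) :
    Mᵀ.mulVec v c
      = (M.submatrix Sum.inl id)ᵀ.mulVec (v ∘ Sum.inl) c
        + (M.submatrix Sum.inr id)ᵀ.mulVec (v ∘ Sum.inr) c := by
  simp [Matrix.mulVec, dotProduct, Fintype.sum_sum_type]

lemma stack_transpose_mulVec {N P : ℕ} {K : Fin N → ℕ}
    (M : (j : Fin N) → Matrix (Fin (K j)) (Fin P) ℝ)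
    (V : ((j : Fin N) × Fin (K j)) → ℝ) (c : Fin P) :
    (Matrix.of fun (u : (j : Fin N) × Fin (K j)) a => M u.1 u.2 a)ᵀ.mulVec V c
      = ∑ j, (M j)ᵀ.mulVec (fun u => V ⟨j, u⟩) c := by
  simp [Matrix.mulVec, dotProduct, ← Finset.univ_sigma_univ, Finset.sum_sigma]

lemma key {α β γ : Type*} [Fintype α] [Fintype β] [Fintype γ]
    {S : Matrix α γ ℝ} {Qm : Matrix α β ℝ} {Fm : Matrix β γ ℝ}
    (hfact : S = Qm * Fm) (v : α → ℝ) :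
    Sᵀ.mulVec v = Fmᵀ.mulVec (Qmᵀ.mulVec v) := by
  rw [hfact, Matrix.transpose_mul, Matrix.mulVec_mulVec]

end Helpers

theorem threeLevelLS_linear_system {p q₁ q₂ m t : ℕ} {n : Fin m → ℕ}
    {k : (i : Fin m) → Fin (n i) → ℕ} {s : Fin m → ℕ}
    (hp : 0 < p) (hq₁ : 0 < q₁) (hq₂ : 0 < q₂) (hm : 0 < m) (hn : ∀ i, 0 < n i)
    (B1 : (i : Fin m) → (j : Fin (n i)) → Matrix (Fin q₂ ⊕ Fin (k i j)) (Fin p) ℝ)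
    (B2 : (i : Fin m) → (j : Fin (n i)) → Matrix (Fin q₂ ⊕ Fin (k i j)) (Fin q₁) ℝ)
    (B3 : (i : Fin m) → (j : Fin (n i)) → Matrix (Fin q₂ ⊕ Fin (k i j)) (Fin q₂) ℝ)
    (hrank : (threeLevelB B1 B2 B3).rank =
      Fintype.card (Fin p ⊕ (Σ i : Fin m, Fin q₁ ⊕ (Fin (n i) × Fin q₂))))
    (Qij : (i : Fin m) → (j : Fin (n i)) →
      Matrix (Fin q₂ ⊕ Fin (k i j)) (Fin q₂ ⊕ Fin (k i j)) ℝ)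
    (hQij : ∀ i j, (Qij i j)ᵀ * Qij i j = 1) (hQij' : ∀ i j, Qij i j * (Qij i j)ᵀ = 1)
    (Rij : (i : Fin m) → (j : Fin (n i)) → Matrix (Fin q₂) (Fin q₂) ℝ)
    (hRijtri : ∀ i j, (Rij i j).BlockTriangular id)
    (hRij : ∀ i j, IsUnit (Rij i j).det)
    (hQRij : ∀ i j, B3 i j = Qij i j * Matrix.fromRows (Rij i j) 0)
    (Qi : (i : Fin m) → Matrix ((j : Fin (n i)) × Fin (k i j)) (Fin q₁ ⊕ Fin (s i)) ℝ)
    (hQi : ∀ i, (Qi i)ᵀ * Qi i = 1) (hQi' : ∀ i, Qi i * (Qi i)ᵀ = 1)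
    (Ri : (i : Fin m) → Matrix (Fin q₁) (Fin q₁) ℝ)
    (hRitri : ∀ i, (Ri i).BlockTriangular id)
    (hRi : ∀ i, IsUnit (Ri i).det)
    (hQRi : ∀ i, stackD2 Qij B2 i = Qi i * Matrix.fromRows (Ri i) 0)
    (Q : Matrix ((i : Fin m) × Fin (s i)) (Fin p ⊕ Fin t) ℝ)
    (hQ : Qᵀ * Q = 1) (hQ' : Q * Qᵀ = 1)
    (R : Matrix (Fin p) (Fin p) ℝ)
    (hRtri : R.BlockTriangular id) (hR : IsUnit R.det)
    (hQR : stackC2 Qi Qij B1 = Q * Matrix.fromRows R 0)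
    (b : (i : Fin m) → (j : Fin (n i)) → (Fin q₂ ⊕ Fin (k i j)) → ℝ)
    (x : (Fin p ⊕ (Σ i : Fin m, Fin q₁ ⊕ (Fin (n i) × Fin q₂))) → ℝ)
    (hx : ((threeLevelB B1 B2 B3)ᵀ * threeLevelB B1 B2 B3).mulVec x =
      (threeLevelB B1 B2 B3)ᵀ.mulVec (fun r => b r.1 r.2.1 r.2.2)) :
    (x ∘ Sum.inl) =
      R⁻¹.mulVec
        ((Qᵀ.mulVec fun r =>
          ((Qi r.1)ᵀ.mulVec fun u =>
            ((Qij r.1 u.1)ᵀ.mulVec (b r.1 u.1)) (Sum.inr u.2)) (Sum.inr r.2)) ∘ Sum.inl) ∧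
    (∀ i : Fin m,
      (fun a => x (Sum.inr ⟨i, Sum.inl a⟩)) =
        ((Ri i)⁻¹).mulVec
          ((((Qi i)ᵀ.mulVec fun u =>
              ((Qij i u.1)ᵀ.mulVec (b i u.1)) (Sum.inr u.2)) ∘ Sum.inl)
            - (C1 Qi Qij B1 i).mulVec (x ∘ Sum.inl))) ∧
    ∀ (i : Fin m) (j : Fin (n i)),
      (fun a => x (Sum.inr ⟨i, Sum.inr (j, a)⟩)) =
        ((Rij i j)⁻¹).mulVec
          ((((Qij i j)ᵀ.mulVec (b i j)) ∘ Sum.inl)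
            - (D1 Qij B1 i j).mulVec (x ∘ Sum.inl)
            - (D1 Qij B2 i j).mulVec (fun a => x (Sum.inr ⟨i, Sum.inl a⟩))) := by
  classical
  set x1 : Fin p → ℝ := x ∘ Sum.inl with hx1def
  set x2 : (i : Fin m) → Fin q₁ → ℝ := fun i a => x (Sum.inr ⟨i, Sum.inl a⟩) with hx2def
  set x3 : (i : Fin m) → (j : Fin (n i)) → Fin q₂ → ℝ :=
    fun i j c => x (Sum.inr ⟨i, Sum.inr (j, c)⟩) with hx3def
  -- residuals
  set r : (i : Fin m) → (j : Fin (n i)) → (Fin q₂ ⊕ Fin (k i j)) → ℝ :=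
    fun i j => (B1 i j).mulVec x1 + (B2 i j).mulVec (x2 i)
      + (B3 i j).mulVec (x3 i j) - b i j with hrdef
  have hBtw : ∀ cc, (threeLevelB B1 B2 B3)ᵀ.mulVec (fun u => r u.1 u.2.1 u.2.2) cc = 0 := by
    intro cc
    have hw : (fun u : (i : Fin m) × ((j : Fin (n i)) × (Fin q₂ ⊕ Fin (k i j))) =>
        r u.1 u.2.1 u.2.2)
        = (threeLevelB B1 B2 B3).mulVec x - (fun u => b u.1 u.2.1 u.2.2) := by
      funext u
      obtain ⟨i, j, a⟩ := u
      simp only [hrdef, Pi.sub_apply, Pi.add_apply, rowFormula B1 B2 B3 x i j a]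
      rfl
    rw [hw, Matrix.mulVec_sub, Matrix.mulVec_mulVec, hx]
    simp
  have L1 : ∀ i j, (B3 i j)ᵀ.mulVec (r i j) = 0 := by
    intro i j; funext c
    have := hBtw (Sum.inr ⟨i, Sum.inr (j, c)⟩)
    rwa [colFormula3] at this
  have L2 : ∀ i c, ∑ j, (B2 i j)ᵀ.mulVec (r i j) c = 0 := by
    intro i c
    have := hBtw (Sum.inr ⟨i, Sum.inl c⟩)
    rwa [colFormula2] at this
  have L3 : ∀ a, ∑ i, ∑ j, (B1 i j)ᵀ.mulVec (r i j) a = 0 := by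
    intro a
    have := hBtw (Sum.inl a)
    rwa [colFormula1] at this
  -- level 3
  set e : (i : Fin m) → (j : Fin (n i)) → (Fin q₂ ⊕ Fin (k i j)) → ℝ :=
    fun i j => (Qij i j)ᵀ.mulVec (r i j) with hedef
  have hQB3 : ∀ i j, (Qij i j)ᵀ * B3 i j = Matrix.fromRows (Rij i j) 0 := by
    intro i j
    rw [hQRij]
    change (Qij i j)ᵀ * (Qij i j * Matrix.fromRows (Rij i j) (0 : Matrix (Fin (k i j)) (Fin q₂) ℝ)) = _
    rw [← Matrix.mul_assoc, hQij, Matrix.one_mul]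
  have he0 : ∀ i j, e i j ∘ Sum.inl = 0 := by
    intro i j
    apply eq_zero_of_transpose_mulVec (hRij i j)
    have hfold : (Qij i j)ᵀ.mulVec (r i j) = e i j := rfl
    have h1 : (B3 i j)ᵀ.mulVec (r i j)
        = (Matrix.fromRows (Rij i j) 0)ᵀ.mulVec (e i j) := by
      rw [key (hQRij i j), hfold]
    rw [Matrix.transpose_fromRows] at h1
    have h2 : e i j = Sum.elim (e i j ∘ Sum.inl) (e i j ∘ Sum.inr) := by
      funext u; cases u <;> rfl
    rw [h2, Matrix.fromCols_mulVec_sumElim] at h1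
    have := (L1 i j).symm.trans h1
    simpa using this.symm
  have he : ∀ i j, e i j = (D0 Qij B1 i j).mulVec x1 + (D0 Qij B2 i j).mulVec (x2 i)
      + (Matrix.fromRows (Rij i j) 0).mulVec (x3 i j) - (Qij i j)ᵀ.mulVec (b i j) := by
    intro i j
    simp only [hedef, hrdef, Matrix.mulVec_sub, Matrix.mulVec_add,
      Matrix.mulVec_mulVec, D0, hQB3]
  -- third conclusion
  have hthird : ∀ i j, x3 i j = ((Rij i j)⁻¹).mulVec
      ((((Qij i j)ᵀ.mulVec (b i j)) ∘ Sum.inl)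
        - (D1 Qij B1 i j).mulVec x1 - (D1 Qij B2 i j).mulVec (x2 i)) := by
    intro i j
    apply solve_mulVec (hRij i j)
    funext c
    have h0 := congrFun (he0 i j) c
    have h1 := congrFun (he i j) (Sum.inl c)
    simp only [Function.comp_apply, Pi.zero_apply] at h0
    rw [h0] at h1
    simp only [Pi.sub_apply, Pi.add_apply, Matrix.fromRows_mulVec, Sum.elim_inl] at h1
    have hD1 : ∀ (P : ℕ) (M : (i : Fin m) → (j : Fin (n i)) →
        Matrix (Fin q₂ ⊕ Fin (k i j)) (Fin P) ℝ) (v : Fin P → ℝ),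
        (D1 Qij M i j).mulVec v c = (D0 Qij M i j).mulVec v (Sum.inl c) := fun _ _ _ => rfl
    simp only [Pi.sub_apply, Function.comp_apply]
    rw [hD1 p B1 x1, hD1 q₁ B2 (x2 i)]
    linarith [h1]
  -- level 2
  set E : (i : Fin m) → ((j : Fin (n i)) × Fin (k i j)) → ℝ :=
    fun i u => e i u.1 (Sum.inr u.2) with hEdef
  have hB2e : ∀ i j c, (B2 i j)ᵀ.mulVec (r i j) c
      = (D2 Qij B2 i j)ᵀ.mulVec (e i j ∘ Sum.inr) c := by
    intro i j c
    have hB2 : B2 i j = Qij i j * D0 Qij B2 i j := by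
      rw [D0, ← Matrix.mul_assoc, hQij', Matrix.one_mul]
    have hfold : (Qij i j)ᵀ.mulVec (r i j) = e i j := rfl
    rw [hB2, Matrix.transpose_mul, ← Matrix.mulVec_mulVec, hfold,
      transpose_mulVec_split (D0 Qij B2 i j) (e i j) c, he0]
    simp [D2]
  have hstackE : ∀ i, (stackD2 Qij B2 i)ᵀ.mulVec (E i) = 0 := by
    intro i; funext c
    rw [show stackD2 Qij B2 i = Matrix.of fun u a => D2 Qij B2 i u.1 u.2 a from rfl,
      stack_transpose_mulVec (fun j => D2 Qij B2 i j) (E i) c]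
    have : ∀ j, (D2 Qij B2 i j)ᵀ.mulVec (fun u => E i ⟨j, u⟩) c
        = (B2 i j)ᵀ.mulVec (r i j) c := by
      intro j; rw [hB2e i j c]; rfl
    simp only [this]
    exact L2 i c
  set f : (i : Fin m) → (Fin q₁ ⊕ Fin (s i)) → ℝ :=
    fun i => (Qi i)ᵀ.mulVec (E i) with hfdef
  have hQC : ∀ i, (Qi i)ᵀ * stackD2 Qij B2 i = Matrix.fromRows (Ri i) 0 := by
    intro i
    rw [hQRi]
    change (Qi i)ᵀ * (Qi i * Matrix.fromRows (Ri i) (0 : Matrix (Fin (s i)) (Fin q₁) ℝ)) = _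
    rw [← Matrix.mul_assoc, hQi, Matrix.one_mul]
  have hf0 : ∀ i, f i ∘ Sum.inl = 0 := by
    intro i
    apply eq_zero_of_transpose_mulVec (hRi i)
    have hfold : (Qi i)ᵀ.mulVec (E i) = f i := rfl
    have h1 : (stackD2 Qij B2 i)ᵀ.mulVec (E i)
        = (Matrix.fromRows (Ri i) 0)ᵀ.mulVec (f i) := by
      rw [key (hQRi i), hfold]
    rw [Matrix.transpose_fromRows] at h1
    have h2 : f i = Sum.elim (f i ∘ Sum.inl) (f i ∘ Sum.inr) := by
      funext u; cases u <;> rfl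
    rw [h2, Matrix.fromCols_mulVec_sumElim] at h1
    have := (hstackE i).symm.trans h1
    simpa using this.symm
  set d2s : (i : Fin m) → ((j : Fin (n i)) × Fin (k i j)) → ℝ :=
    fun i u => ((Qij i u.1)ᵀ.mulVec (b i u.1)) (Sum.inr u.2) with hd2sdef
  have hE : ∀ i, E i = (stackD2 Qij B1 i).mulVec x1
      + (stackD2 Qij B2 i).mulVec (x2 i) - d2s i := by
    intro i; funext u
    have h1 := congrFun (he i u.1) (Sum.inr u.2)
    simp only [Pi.sub_apply, Pi.add_apply, Matrix.fromRows_mulVec, Sum.elim_inr,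
      Matrix.zero_mulVec, Pi.zero_apply, add_zero] at h1
    have hD2 : ∀ (P : ℕ) (M : (i : Fin m) → (j : Fin (n i)) →
        Matrix (Fin q₂ ⊕ Fin (k i j)) (Fin P) ℝ) (v : Fin P → ℝ),
        (stackD2 Qij M i).mulVec v u = (D0 Qij M i u.1).mulVec v (Sum.inr u.2) :=
      fun _ _ _ => rfl
    simp only [Pi.sub_apply, Pi.add_apply]
    rw [hD2 p B1 x1, hD2 q₁ B2 (x2 i)]
    exact h1
  have hfeq : ∀ i, f i = (C0 Qi Qij B1 i).mulVec x1
      + (Matrix.fromRows (Ri i) 0).mulVec (x2 i) - (Qi i)ᵀ.mulVec (d2s i) := by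
    intro i
    simp only [hfdef]
    rw [hE i]
    simp only [Matrix.mulVec_sub, Matrix.mulVec_add, Matrix.mulVec_mulVec, C0, hQC]
  -- second conclusion
  have hsecond : ∀ i, x2 i = ((Ri i)⁻¹).mulVec
      ((((Qi i)ᵀ.mulVec (d2s i)) ∘ Sum.inl) - (C1 Qi Qij B1 i).mulVec x1) := by
    intro i
    apply solve_mulVec (hRi i)
    funext c
    have h0 := congrFun (hf0 i) c
    have h1 := congrFun (hfeq i) (Sum.inl c)
    simp only [Function.comp_apply, Pi.zero_apply] at h0
    rw [h0] at h1
    simp only [Pi.sub_apply, Pi.add_apply, Matrix.fromRows_mulVec, Sum.elim_inl] at h1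
    have hC1 : (C1 Qi Qij B1 i).mulVec x1 c = (C0 Qi Qij B1 i).mulVec x1 (Sum.inl c) := rfl
    simp only [Pi.sub_apply, Function.comp_apply]
    rw [hC1]
    linarith [h1]
  -- level 1
  set F : ((i : Fin m) × Fin (s i)) → ℝ := fun u => f u.1 (Sum.inr u.2) with hFdef
  have hB1f : ∀ i a, ∑ j, (B1 i j)ᵀ.mulVec (r i j) a
      = (C2 Qi Qij B1 i)ᵀ.mulVec (f i ∘ Sum.inr) a := by
    intro i a
    have step1 : ∀ j, (B1 i j)ᵀ.mulVec (r i j) a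
        = (D2 Qij B1 i j)ᵀ.mulVec (e i j ∘ Sum.inr) a := by
      intro j
      have hB1 : B1 i j = Qij i j * D0 Qij B1 i j := by
        rw [D0, ← Matrix.mul_assoc, hQij', Matrix.one_mul]
      have hfold : (Qij i j)ᵀ.mulVec (r i j) = e i j := rfl
      rw [hB1, Matrix.transpose_mul, ← Matrix.mulVec_mulVec, hfold,
        transpose_mulVec_split (D0 Qij B1 i j) (e i j) a, he0]
      simp [D2]
    have step2 : ∑ j, (B1 i j)ᵀ.mulVec (r i j) a
        = (stackD2 Qij B1 i)ᵀ.mulVec (E i) a := by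
      rw [show stackD2 Qij B1 i = Matrix.of fun u a => D2 Qij B1 i u.1 u.2 a from rfl,
        stack_transpose_mulVec (fun j => D2 Qij B1 i j) (E i) a]
      refine Finset.sum_congr rfl fun j _ => (step1 j).trans rfl
    have hS : stackD2 Qij B1 i = Qi i * C0 Qi Qij B1 i := by
      rw [C0, ← Matrix.mul_assoc, hQi', Matrix.one_mul]
    have step3 : (stackD2 Qij B1 i)ᵀ.mulVec (E i) a
        = (C0 Qi Qij B1 i)ᵀ.mulVec (f i) a := by
      have hfold : (Qi i)ᵀ.mulVec (E i) = f i := rfl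
      rw [key hS, hfold]
    have step4 : (C0 Qi Qij B1 i)ᵀ.mulVec (f i) a
        = (C2 Qi Qij B1 i)ᵀ.mulVec (f i ∘ Sum.inr) a := by
      rw [transpose_mulVec_split (C0 Qi Qij B1 i) (f i) a, hf0]
      simp [C2]
    rw [step2, step3, step4]
  have hstackF : (stackC2 Qi Qij B1)ᵀ.mulVec F = 0 := by
    funext a
    rw [show stackC2 Qi Qij B1 = Matrix.of fun u a => C2 Qi Qij B1 u.1 u.2 a from rfl,
      stack_transpose_mulVec (fun i => C2 Qi Qij B1 i) F a]
    have : ∀ i, (C2 Qi Qij B1 i)ᵀ.mulVec (fun u => F ⟨i, u⟩) a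
        = ∑ j, (B1 i j)ᵀ.mulVec (r i j) a := by
      intro i; rw [hB1f i a]; rfl
    simp only [this]
    exact L3 a
  set g : (Fin p ⊕ Fin t) → ℝ := Qᵀ.mulVec F with hgdef
  have hQC2 : Qᵀ * stackC2 Qi Qij B1 = Matrix.fromRows R 0 := by
    rw [hQR]
    change Qᵀ * (Q * Matrix.fromRows R (0 : Matrix (Fin t) (Fin p) ℝ)) = _
    rw [← Matrix.mul_assoc, hQ, Matrix.one_mul]
  have hg0 : g ∘ Sum.inl = 0 := by
    apply eq_zero_of_transpose_mulVec hR
    have hfold : Qᵀ.mulVec F = g := rfl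
    have h1 : (stackC2 Qi Qij B1)ᵀ.mulVec F = (Matrix.fromRows R 0)ᵀ.mulVec g := by
      rw [key hQR, hfold]
    rw [Matrix.transpose_fromRows] at h1
    have h2 : g = Sum.elim (g ∘ Sum.inl) (g ∘ Sum.inr) := by
      funext u; cases u <;> rfl
    rw [h2, Matrix.fromCols_mulVec_sumElim] at h1
    have := hstackF.symm.trans h1
    simpa using this.symm
  set c2s : ((i : Fin m) × Fin (s i)) → ℝ :=
    fun u => ((Qi u.1)ᵀ.mulVec (d2s u.1)) (Sum.inr u.2) with hc2sdef
  have hF : F = (stackC2 Qi Qij B1).mulVec x1 - c2s := by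
    funext u
    have h1 := congrFun (hfeq u.1) (Sum.inr u.2)
    simp only [Pi.sub_apply, Pi.add_apply, Matrix.fromRows_mulVec, Sum.elim_inr,
      Matrix.zero_mulVec, Pi.zero_apply, add_zero] at h1
    have hst : (stackC2 Qi Qij B1).mulVec x1 u
        = (C0 Qi Qij B1 u.1).mulVec x1 (Sum.inr u.2) := rfl
    simp only [Pi.sub_apply]
    rw [hst]
    exact h1
  have hfirst : x1 = R⁻¹.mulVec ((Qᵀ.mulVec c2s) ∘ Sum.inl) := by
    apply solve_mulVec hR
    funext a
    have h0 := congrFun hg0 a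
    have h1 : g (Sum.inl a) = (Matrix.fromRows R (0 : Matrix (Fin t) (Fin p) ℝ)).mulVec x1 (Sum.inl a)
        - (Qᵀ.mulVec c2s) (Sum.inl a) := by
      simp only [hgdef]
      rw [hF]
      simp only [Matrix.mulVec_sub, Matrix.mulVec_mulVec, hQC2, Pi.sub_apply]
    simp only [Function.comp_apply, Pi.zero_apply] at h0
    rw [h0] at h1
    simp only [Matrix.fromRows_mulVec, Sum.elim_inl] at h1
    simp only [Function.comp_apply]
    linarith [h1]
  refine ⟨hfirst, hsecond, hthird⟩
end

section
/- In the three-level least squares setting with the given QR decompositions, det A = ( (product of the diagonal entries of R) · ∏_{i=1}^m ( (product of the diagonal entries of Rᵢ) · ∏_{j=1}^{nᵢ} (product of the diagonal entries of Rᵢⱼ) ) )². -/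
open Matrix

section Aux

variable {p q₁ q₂ m : ℕ} {n : Fin m → ℕ} {k : (i : Fin m) → Fin (n i) → ℕ} {s : Fin m → ℕ}

lemma sum_rot {ι ι' κ : Type*} [Fintype ι] [Fintype ι'] [DecidableEq ι]
    (Q : Matrix ι ι' ℝ) (hQ' : Q * Qᵀ = 1) (W : Matrix ι κ ℝ) (x y : κ) :
    ∑ r, W r x * W r y = ∑ r, (Qᵀ * W) r x * (Qᵀ * W) r y := by
  have h : Wᵀ * W = (Qᵀ * W)ᵀ * (Qᵀ * W) := by
    rw [transpose_mul, transpose_transpose, Matrix.mul_assoc,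
      ← Matrix.mul_assoc Q, hQ', Matrix.one_mul]
  have h2 := congrFun (congrFun h x) y
  simpa [mul_apply, transpose_apply, mul_comm] using h2

lemma det_blockTri_inj {ι α : Type*} [Fintype ι] [DecidableEq ι] [LinearOrder α]
    (M : Matrix ι ι ℝ) (b : ι → α) (hb : Function.Injective b)
    (h : M.BlockTriangular b) : M.det = ∏ x, M x x := by
  rw [h.det]
  rw [Finset.prod_image (fun x _ y _ hxy => hb hxy)]
  refine Finset.prod_congr rfl fun x _ => ?_
  haveI : Unique {y // b y = b x} :=
    ⟨⟨⟨x, rfl⟩⟩, fun y => Subtype.ext (hb y.2)⟩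
  rw [Matrix.det_unique]
  show M _ _ = M x x
  congr 1 <;>
    exact congrArg Subtype.val (Subsingleton.elim (default : {y // b y = b x}) ⟨x, rfl⟩)

/-- The square "triangularized" matrix. -/
def bigN
    (Qij : (i : Fin m) → (j : Fin (n i)) →
      Matrix (Fin q₂ ⊕ Fin (k i j)) (Fin q₂ ⊕ Fin (k i j)) ℝ)
    (B1 : (i : Fin m) → (j : Fin (n i)) → Matrix (Fin q₂ ⊕ Fin (k i j)) (Fin p) ℝ)
    (B2 : (i : Fin m) → (j : Fin (n i)) → Matrix (Fin q₂ ⊕ Fin (k i j)) (Fin q₁) ℝ)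
    (Qi : (i : Fin m) → Matrix ((j : Fin (n i)) × Fin (k i j)) (Fin q₁ ⊕ Fin (s i)) ℝ)
    (Ri : (i : Fin m) → Matrix (Fin q₁) (Fin q₁) ℝ)
    (Rij : (i : Fin m) → (j : Fin (n i)) → Matrix (Fin q₂) (Fin q₂) ℝ)
    (R : Matrix (Fin p) (Fin p) ℝ) :
    Matrix (((i : Fin m) × ((j : Fin (n i)) × Fin q₂)) ⊕ (((i : Fin m) × Fin q₁) ⊕ Fin p))
           (Fin p ⊕ (Σ i : Fin m, Fin q₁ ⊕ (Fin (n i) × Fin q₂))) ℝ :=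
  Matrix.of fun r z =>
    match r, z with
    | Sum.inl ⟨i, j, a⟩, Sum.inl c => D1 Qij B1 i j a c
    | Sum.inl ⟨i, j, a⟩, Sum.inr ⟨i', Sum.inl b⟩ =>
        if i = i' then D1 Qij B2 i j a b else 0
    | Sum.inl ⟨i, j, a⟩, Sum.inr ⟨i', Sum.inr (j', b)⟩ =>
        if (⟨i, j⟩ : Σ i, Fin (n i)) = ⟨i', j'⟩ then Rij i j a b else 0
    | Sum.inr (Sum.inl ⟨i, a⟩), Sum.inl c => C1 Qi Qij B1 i a c
    | Sum.inr (Sum.inl ⟨i, a⟩), Sum.inr ⟨i', Sum.inl b⟩ =>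
        if i = i' then Ri i a b else 0
    | Sum.inr (Sum.inl _), Sum.inr ⟨_, Sum.inr _⟩ => 0
    | Sum.inr (Sum.inr a), Sum.inl c => R a c
    | Sum.inr (Sum.inr _), Sum.inr _ => 0

/-- Bottom rows after the level-3 rotation. -/
def botIJ
    (Qij : (i : Fin m) → (j : Fin (n i)) →
      Matrix (Fin q₂ ⊕ Fin (k i j)) (Fin q₂ ⊕ Fin (k i j)) ℝ)
    (B1 : (i : Fin m) → (j : Fin (n i)) → Matrix (Fin q₂ ⊕ Fin (k i j)) (Fin p) ℝ)
    (B2 : (i : Fin m) → (j : Fin (n i)) → Matrix (Fin q₂ ⊕ Fin (k i j)) (Fin q₁) ℝ)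
    (i : Fin m) (j : Fin (n i)) :
    Matrix (Fin (k i j)) (Fin p ⊕ (Σ i : Fin m, Fin q₁ ⊕ (Fin (n i) × Fin q₂))) ℝ :=
  Matrix.of fun a z =>
    match z with
    | Sum.inl c => D2 Qij B1 i j a c
    | Sum.inr ⟨i', Sum.inl b⟩ => if i = i' then D2 Qij B2 i j a b else 0
    | Sum.inr ⟨_, Sum.inr _⟩ => 0

/-- Bottom rows after the level-2 rotation. -/
def botI
    (Qi : (i : Fin m) → Matrix ((j : Fin (n i)) × Fin (k i j)) (Fin q₁ ⊕ Fin (s i)) ℝ)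
    (Qij : (i : Fin m) → (j : Fin (n i)) →
      Matrix (Fin q₂ ⊕ Fin (k i j)) (Fin q₂ ⊕ Fin (k i j)) ℝ)
    (B1 : (i : Fin m) → (j : Fin (n i)) → Matrix (Fin q₂ ⊕ Fin (k i j)) (Fin p) ℝ)
    (i : Fin m) :
    Matrix (Fin (s i)) (Fin p ⊕ (Σ i : Fin m, Fin q₁ ⊕ (Fin (n i) × Fin q₂))) ℝ :=
  Matrix.of fun a z =>
    match z with
    | Sum.inl c => C2 Qi Qij B1 i a c
    | Sum.inr _ => 0

lemma block_step1
    (B1 : (i : Fin m) → (j : Fin (n i)) → Matrix (Fin q₂ ⊕ Fin (k i j)) (Fin p) ℝ)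
    (B2 : (i : Fin m) → (j : Fin (n i)) → Matrix (Fin q₂ ⊕ Fin (k i j)) (Fin q₁) ℝ)
    (B3 : (i : Fin m) → (j : Fin (n i)) → Matrix (Fin q₂ ⊕ Fin (k i j)) (Fin q₂) ℝ)
    (Qij : (i : Fin m) → (j : Fin (n i)) →
      Matrix (Fin q₂ ⊕ Fin (k i j)) (Fin q₂ ⊕ Fin (k i j)) ℝ)
    (hQij : ∀ i j, (Qij i j)ᵀ * Qij i j = 1) (hQij' : ∀ i j, Qij i j * (Qij i j)ᵀ = 1)
    (Rij : (i : Fin m) → (j : Fin (n i)) → Matrix (Fin q₂) (Fin q₂) ℝ)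
    (hQRij : ∀ i j, B3 i j = Qij i j * Matrix.fromRows (Rij i j) 0)
    (Qi : (i : Fin m) → Matrix ((j : Fin (n i)) × Fin (k i j)) (Fin q₁ ⊕ Fin (s i)) ℝ)
    (Ri : (i : Fin m) → Matrix (Fin q₁) (Fin q₁) ℝ)
    (R : Matrix (Fin p) (Fin p) ℝ)
    (i : Fin m) (j : Fin (n i))
    (x y : Fin p ⊕ (Σ i : Fin m, Fin q₁ ⊕ (Fin (n i) × Fin q₂))) :
    ∑ r : Fin q₂ ⊕ Fin (k i j),
        threeLevelB B1 B2 B3 ⟨i, j, r⟩ x * threeLevelB B1 B2 B3 ⟨i, j, r⟩ y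
      = (∑ a : Fin q₂,
          bigN Qij B1 B2 Qi Ri Rij R (Sum.inl ⟨i, j, a⟩) x *
            bigN Qij B1 B2 Qi Ri Rij R (Sum.inl ⟨i, j, a⟩) y)
        + ∑ a : Fin (k i j), botIJ Qij B1 B2 i j a x * botIJ Qij B1 B2 i j a y := by
  set W : Matrix (Fin q₂ ⊕ Fin (k i j))
      (Fin p ⊕ (Σ i : Fin m, Fin q₁ ⊕ (Fin (n i) × Fin q₂))) ℝ :=
    Matrix.of fun r z => threeLevelB B1 B2 B3 ⟨i, j, r⟩ z with hW
  have hRij0 : (Qij i j)ᵀ * B3 i j = Matrix.fromRows (Rij i j) 0 := by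
    rw [hQRij]
    refine (Matrix.mul_assoc _ _ (Matrix.fromRows (Rij i j) 0)).symm.trans ?_
    rw [hQij, Matrix.one_mul]
  have htop : ∀ a z, ((Qij i j)ᵀ * W) (Sum.inl a) z =
      bigN Qij B1 B2 Qi Ri Rij R (Sum.inl ⟨i, j, a⟩) z := by
    intro a z
    obtain c | ⟨i', b | ⟨j', b⟩⟩ := z
    · simp [hW, mul_apply, threeLevelB, bigN, D1, D0, W]
    · by_cases hii : i = i' <;>
        simp [hW, mul_apply, threeLevelB, bigN, D1, D0, hii, W]
    · by_cases hij : (⟨i, j⟩ : Σ i, Fin (n i)) = ⟨i', j'⟩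
      · have := congrFun (congrFun hRij0 (Sum.inl a)) b
        simp only [mul_apply, transpose_apply, Matrix.fromRows_apply_inl] at this
        simp [hW, mul_apply, threeLevelB, bigN, hij, W, ← this]
      · simp [hW, mul_apply, threeLevelB, bigN, hij, W]
  have hbot : ∀ a z, ((Qij i j)ᵀ * W) (Sum.inr a) z = botIJ Qij B1 B2 i j a z := by
    intro a z
    obtain c | ⟨i', b | ⟨j', b⟩⟩ := z
    · simp [hW, mul_apply, threeLevelB, botIJ, D2, D0, W]
    · by_cases hii : i = i' <;>
        simp [hW, mul_apply, threeLevelB, botIJ, D2, D0, hii, W]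
    · by_cases hij : (⟨i, j⟩ : Σ i, Fin (n i)) = ⟨i', j'⟩
      · have := congrFun (congrFun hRij0 (Sum.inr a)) b
        simp only [mul_apply, transpose_apply, Matrix.fromRows_apply_inr,
          Matrix.zero_apply] at this
        simp [hW, mul_apply, threeLevelB, botIJ, hij, W, ← this]
      · simp [hW, mul_apply, threeLevelB, botIJ, hij, W]
  calc ∑ r : Fin q₂ ⊕ Fin (k i j),
        threeLevelB B1 B2 B3 ⟨i, j, r⟩ x * threeLevelB B1 B2 B3 ⟨i, j, r⟩ y
      = ∑ r, W r x * W r y := rfl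
    _ = ∑ r, ((Qij i j)ᵀ * W) r x * ((Qij i j)ᵀ * W) r y :=
        sum_rot (Qij i j) (hQij' i j) W x y
    _ = _ := by rw [Fintype.sum_sum_type]; simp only [htop, hbot]

lemma block_step2
    (B1 : (i : Fin m) → (j : Fin (n i)) → Matrix (Fin q₂ ⊕ Fin (k i j)) (Fin p) ℝ)
    (B2 : (i : Fin m) → (j : Fin (n i)) → Matrix (Fin q₂ ⊕ Fin (k i j)) (Fin q₁) ℝ)
    (Qij : (i : Fin m) → (j : Fin (n i)) →
      Matrix (Fin q₂ ⊕ Fin (k i j)) (Fin q₂ ⊕ Fin (k i j)) ℝ)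
    (Qi : (i : Fin m) → Matrix ((j : Fin (n i)) × Fin (k i j)) (Fin q₁ ⊕ Fin (s i)) ℝ)
    (hQi : ∀ i, (Qi i)ᵀ * Qi i = 1) (hQi' : ∀ i, Qi i * (Qi i)ᵀ = 1)
    (Ri : (i : Fin m) → Matrix (Fin q₁) (Fin q₁) ℝ)
    (hQRi : ∀ i, stackD2 Qij B2 i = Qi i * Matrix.fromRows (Ri i) 0)
    (Rij : (i : Fin m) → (j : Fin (n i)) → Matrix (Fin q₂) (Fin q₂) ℝ)
    (R : Matrix (Fin p) (Fin p) ℝ)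
    (i : Fin m)
    (x y : Fin p ⊕ (Σ i : Fin m, Fin q₁ ⊕ (Fin (n i) × Fin q₂))) :
    ∑ r : (j : Fin (n i)) × Fin (k i j),
        botIJ Qij B1 B2 i r.1 r.2 x * botIJ Qij B1 B2 i r.1 r.2 y
      = (∑ a : Fin q₁,
          bigN Qij B1 B2 Qi Ri Rij R (Sum.inr (Sum.inl ⟨i, a⟩)) x *
            bigN Qij B1 B2 Qi Ri Rij R (Sum.inr (Sum.inl ⟨i, a⟩)) y)
        + ∑ a : Fin (s i), botI Qi Qij B1 i a x * botI Qi Qij B1 i a y := by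
  set W : Matrix ((j : Fin (n i)) × Fin (k i j))
      (Fin p ⊕ (Σ i : Fin m, Fin q₁ ⊕ (Fin (n i) × Fin q₂))) ℝ :=
    Matrix.of fun r z => botIJ Qij B1 B2 i r.1 r.2 z with hW
  have hRi0 : (Qi i)ᵀ * stackD2 Qij B2 i = Matrix.fromRows (Ri i) 0 := by
    rw [hQRi]
    refine (Matrix.mul_assoc _ _ (Matrix.fromRows (Ri i) 0)).symm.trans ?_
    rw [hQi, Matrix.one_mul]
  have htop : ∀ a z, ((Qi i)ᵀ * W) (Sum.inl a) z =
      bigN Qij B1 B2 Qi Ri Rij R (Sum.inr (Sum.inl ⟨i, a⟩)) z := by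
    intro a z
    obtain c | ⟨i', b | ⟨j', b⟩⟩ := z
    · simp [hW, mul_apply, botIJ, bigN, C1, C0, stackD2, W]
    · by_cases hii : i = i'
      · have := congrFun (congrFun hRi0 (Sum.inl a)) b
        simp only [mul_apply, transpose_apply, Matrix.fromRows_apply_inl] at this
        simp only [mul_apply, transpose_apply, hW, Matrix.of_apply, botIJ, bigN,
          if_pos hii]
        rw [← this]
        exact Finset.sum_congr rfl fun r _ => by simp [stackD2]
      · simp [hW, mul_apply, botIJ, bigN, hii, W]
    · simp [hW, mul_apply, botIJ, bigN, W]
  have hbot : ∀ a z, ((Qi i)ᵀ * W) (Sum.inr a) z = botI Qi Qij B1 i a z := by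
    intro a z
    obtain c | ⟨i', b | ⟨j', b⟩⟩ := z
    · simp [hW, mul_apply, botIJ, botI, C2, C0, stackD2, W]
    · by_cases hii : i = i'
      · have := congrFun (congrFun hRi0 (Sum.inr a)) b
        simp only [mul_apply, transpose_apply, Matrix.fromRows_apply_inr,
          Matrix.zero_apply] at this
        simp only [mul_apply, transpose_apply, hW, Matrix.of_apply, botIJ, botI,
          if_pos hii]
        rw [← this]
        exact Finset.sum_congr rfl fun r _ => by simp [stackD2]
      · simp [hW, mul_apply, botIJ, botI, hii, W]
    · simp [hW, mul_apply, botIJ, botI, W]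
  calc ∑ r : (j : Fin (n i)) × Fin (k i j),
        botIJ Qij B1 B2 i r.1 r.2 x * botIJ Qij B1 B2 i r.1 r.2 y
      = ∑ r, W r x * W r y := rfl
    _ = ∑ r, ((Qi i)ᵀ * W) r x * ((Qi i)ᵀ * W) r y :=
        sum_rot (Qi i) (hQi' i) W x y
    _ = _ := by rw [Fintype.sum_sum_type]; simp only [htop, hbot]

lemma block_step3 {t : ℕ}
    (B1 : (i : Fin m) → (j : Fin (n i)) → Matrix (Fin q₂ ⊕ Fin (k i j)) (Fin p) ℝ)
    (B2 : (i : Fin m) → (j : Fin (n i)) → Matrix (Fin q₂ ⊕ Fin (k i j)) (Fin q₁) ℝ)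
    (Qij : (i : Fin m) → (j : Fin (n i)) →
      Matrix (Fin q₂ ⊕ Fin (k i j)) (Fin q₂ ⊕ Fin (k i j)) ℝ)
    (Qi : (i : Fin m) → Matrix ((j : Fin (n i)) × Fin (k i j)) (Fin q₁ ⊕ Fin (s i)) ℝ)
    (Ri : (i : Fin m) → Matrix (Fin q₁) (Fin q₁) ℝ)
    (Rij : (i : Fin m) → (j : Fin (n i)) → Matrix (Fin q₂) (Fin q₂) ℝ)
    (Q : Matrix ((i : Fin m) × Fin (s i)) (Fin p ⊕ Fin t) ℝ)
    (hQ : Qᵀ * Q = 1) (hQ' : Q * Qᵀ = 1)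
    (R : Matrix (Fin p) (Fin p) ℝ)
    (hQR : stackC2 Qi Qij B1 = Q * Matrix.fromRows R 0)
    (x y : Fin p ⊕ (Σ i : Fin m, Fin q₁ ⊕ (Fin (n i) × Fin q₂))) :
    ∑ r : (i : Fin m) × Fin (s i),
        botI Qi Qij B1 r.1 r.2 x * botI Qi Qij B1 r.1 r.2 y
      = ∑ a : Fin p,
          bigN Qij B1 B2 Qi Ri Rij R (Sum.inr (Sum.inr a)) x *
            bigN Qij B1 B2 Qi Ri Rij R (Sum.inr (Sum.inr a)) y := by
  set W : Matrix ((i : Fin m) × Fin (s i))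
      (Fin p ⊕ (Σ i : Fin m, Fin q₁ ⊕ (Fin (n i) × Fin q₂))) ℝ :=
    Matrix.of fun r z => botI Qi Qij B1 r.1 r.2 z with hW
  have hR0 : Qᵀ * stackC2 Qi Qij B1 = Matrix.fromRows R 0 := by
    rw [hQR]
    refine (Matrix.mul_assoc _ _ (Matrix.fromRows R 0)).symm.trans ?_
    rw [hQ, Matrix.one_mul]
  have htop : ∀ (a : Fin p) z, (Qᵀ * W) (Sum.inl a) z =
      bigN Qij B1 B2 Qi Ri Rij R (Sum.inr (Sum.inr a)) z := by
    intro a z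
    obtain c | ⟨i', b | ⟨j', b⟩⟩ := z
    · have := congrFun (congrFun hR0 (Sum.inl a)) c
      simp only [mul_apply, transpose_apply, Matrix.fromRows_apply_inl] at this
      simp only [mul_apply, transpose_apply, hW, Matrix.of_apply, botI, bigN]
      rw [← this]
      exact Finset.sum_congr rfl fun r _ => by simp [stackC2]
    · simp [hW, mul_apply, botI, bigN, W]
    · simp [hW, mul_apply, botI, bigN, W]
  have hbot : ∀ (a : Fin t) z, (Qᵀ * W) (Sum.inr a) z = 0 := by
    intro a z
    obtain c | ⟨i', b | ⟨j', b⟩⟩ := z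
    · have := congrFun (congrFun hR0 (Sum.inr a)) c
      simp only [mul_apply, transpose_apply, Matrix.fromRows_apply_inr,
        Matrix.zero_apply] at this
      simp only [mul_apply, transpose_apply, hW, Matrix.of_apply, botI]
      rw [← this]
      exact Finset.sum_congr rfl fun r _ => by simp [stackC2]
    · simp [hW, mul_apply, botI, W]
    · simp [hW, mul_apply, botI, W]
  calc ∑ r : (i : Fin m) × Fin (s i),
        botI Qi Qij B1 r.1 r.2 x * botI Qi Qij B1 r.1 r.2 y
      = ∑ r, W r x * W r y := rfl
    _ = ∑ r, (Qᵀ * W) r x * (Qᵀ * W) r y := sum_rot Q hQ' W x y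
    _ = _ := by rw [Fintype.sum_sum_type]; simp only [htop, hbot]; simp

lemma key_eq {t : ℕ}
    (B1 : (i : Fin m) → (j : Fin (n i)) → Matrix (Fin q₂ ⊕ Fin (k i j)) (Fin p) ℝ)
    (B2 : (i : Fin m) → (j : Fin (n i)) → Matrix (Fin q₂ ⊕ Fin (k i j)) (Fin q₁) ℝ)
    (B3 : (i : Fin m) → (j : Fin (n i)) → Matrix (Fin q₂ ⊕ Fin (k i j)) (Fin q₂) ℝ)
    (Qij : (i : Fin m) → (j : Fin (n i)) →
      Matrix (Fin q₂ ⊕ Fin (k i j)) (Fin q₂ ⊕ Fin (k i j)) ℝ)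
    (hQij : ∀ i j, (Qij i j)ᵀ * Qij i j = 1) (hQij' : ∀ i j, Qij i j * (Qij i j)ᵀ = 1)
    (Rij : (i : Fin m) → (j : Fin (n i)) → Matrix (Fin q₂) (Fin q₂) ℝ)
    (hQRij : ∀ i j, B3 i j = Qij i j * Matrix.fromRows (Rij i j) 0)
    (Qi : (i : Fin m) → Matrix ((j : Fin (n i)) × Fin (k i j)) (Fin q₁ ⊕ Fin (s i)) ℝ)
    (hQi : ∀ i, (Qi i)ᵀ * Qi i = 1) (hQi' : ∀ i, Qi i * (Qi i)ᵀ = 1)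
    (Ri : (i : Fin m) → Matrix (Fin q₁) (Fin q₁) ℝ)
    (hQRi : ∀ i, stackD2 Qij B2 i = Qi i * Matrix.fromRows (Ri i) 0)
    (Q : Matrix ((i : Fin m) × Fin (s i)) (Fin p ⊕ Fin t) ℝ)
    (hQ : Qᵀ * Q = 1) (hQ' : Q * Qᵀ = 1)
    (R : Matrix (Fin p) (Fin p) ℝ)
    (hQR : stackC2 Qi Qij B1 = Q * Matrix.fromRows R 0) :
    (threeLevelB B1 B2 B3)ᵀ * threeLevelB B1 B2 B3 =
      (bigN Qij B1 B2 Qi Ri Rij R)ᵀ * bigN Qij B1 B2 Qi Ri Rij R := by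
  ext x y
  simp only [mul_apply, transpose_apply]
  set B := threeLevelB B1 B2 B3
  set N := bigN Qij B1 B2 Qi Ri Rij R
  calc ∑ r, B r x * B r y
      = ∑ i, ∑ j, ∑ r : Fin q₂ ⊕ Fin (k i j), B ⟨i, ⟨j, r⟩⟩ x * B ⟨i, ⟨j, r⟩⟩ y := by
        rw [← Finset.univ_sigma_univ, Finset.sum_sigma]
        exact Finset.sum_congr rfl fun i _ => by
          rw [← Finset.univ_sigma_univ, Finset.sum_sigma]
    _ = ∑ i, ∑ j,
          ((∑ a : Fin q₂, N (Sum.inl ⟨i, j, a⟩) x * N (Sum.inl ⟨i, j, a⟩) y)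
            + ∑ a : Fin (k i j), botIJ Qij B1 B2 i j a x * botIJ Qij B1 B2 i j a y) :=
        Finset.sum_congr rfl fun i _ => Finset.sum_congr rfl fun j _ =>
          block_step1 B1 B2 B3 Qij hQij hQij' Rij hQRij Qi Ri R i j x y
    _ = (∑ i, ∑ j, ∑ a : Fin q₂, N (Sum.inl ⟨i, j, a⟩) x * N (Sum.inl ⟨i, j, a⟩) y)
          + ∑ i, ∑ j, ∑ a : Fin (k i j),
              botIJ Qij B1 B2 i j a x * botIJ Qij B1 B2 i j a y := by
        simp [Finset.sum_add_distrib]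
    _ = (∑ i, ∑ j, ∑ a : Fin q₂, N (Sum.inl ⟨i, j, a⟩) x * N (Sum.inl ⟨i, j, a⟩) y)
          + ∑ i,
            ((∑ a : Fin q₁, N (Sum.inr (Sum.inl ⟨i, a⟩)) x * N (Sum.inr (Sum.inl ⟨i, a⟩)) y)
              + ∑ a : Fin (s i), botI Qi Qij B1 i a x * botI Qi Qij B1 i a y) := by
        refine congrArg _ (Finset.sum_congr rfl fun i _ => ?_)
        rw [show (∑ j, ∑ a : Fin (k i j),
              botIJ Qij B1 B2 i j a x * botIJ Qij B1 B2 i j a y)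
            = ∑ r : (j : Fin (n i)) × Fin (k i j),
                botIJ Qij B1 B2 i r.1 r.2 x * botIJ Qij B1 B2 i r.1 r.2 y by
          rw [← Finset.univ_sigma_univ, Finset.sum_sigma]]
        exact block_step2 B1 B2 Qij Qi hQi hQi' Ri hQRi Rij R i x y
    _ = (∑ i, ∑ j, ∑ a : Fin q₂, N (Sum.inl ⟨i, j, a⟩) x * N (Sum.inl ⟨i, j, a⟩) y)
          + ((∑ i, ∑ a : Fin q₁,
                N (Sum.inr (Sum.inl ⟨i, a⟩)) x * N (Sum.inr (Sum.inl ⟨i, a⟩)) y)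
            + ∑ a : Fin p,
                N (Sum.inr (Sum.inr a)) x * N (Sum.inr (Sum.inr a)) y) := by
        rw [Finset.sum_add_distrib]
        congr 1
        rw [show (∑ i, ∑ a : Fin (s i), botI Qi Qij B1 i a x * botI Qi Qij B1 i a y)
            = ∑ r : (i : Fin m) × Fin (s i),
                botI Qi Qij B1 r.1 r.2 x * botI Qi Qij B1 r.1 r.2 y by
          rw [← Finset.univ_sigma_univ, Finset.sum_sigma]]
        rw [block_step3 B1 B2 Qij Qi Ri Rij Q hQ hQ' R hQR x y]
    _ = ∑ r, N r x * N r y := by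
        rw [Fintype.sum_sum_type, Fintype.sum_sum_type]
        congr 1
        · rw [← Finset.univ_sigma_univ, Finset.sum_sigma]
          exact Finset.sum_congr rfl fun i _ => by
            rw [← Finset.univ_sigma_univ, Finset.sum_sigma]
        · congr 1
          rw [← Finset.univ_sigma_univ, Finset.sum_sigma]

end Aux

theorem threeLevelLS_det {p q₁ q₂ m t : ℕ} {n : Fin m → ℕ}
    {k : (i : Fin m) → Fin (n i) → ℕ} {s : Fin m → ℕ}
    (hp : 0 < p) (hq₁ : 0 < q₁) (hq₂ : 0 < q₂) (hm : 0 < m) (hn : ∀ i, 0 < n i)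
    (B1 : (i : Fin m) → (j : Fin (n i)) → Matrix (Fin q₂ ⊕ Fin (k i j)) (Fin p) ℝ)
    (B2 : (i : Fin m) → (j : Fin (n i)) → Matrix (Fin q₂ ⊕ Fin (k i j)) (Fin q₁) ℝ)
    (B3 : (i : Fin m) → (j : Fin (n i)) → Matrix (Fin q₂ ⊕ Fin (k i j)) (Fin q₂) ℝ)
    (hrank : (threeLevelB B1 B2 B3).rank =
      Fintype.card (Fin p ⊕ (Σ i : Fin m, Fin q₁ ⊕ (Fin (n i) × Fin q₂))))
    (Qij : (i : Fin m) → (j : Fin (n i)) →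
      Matrix (Fin q₂ ⊕ Fin (k i j)) (Fin q₂ ⊕ Fin (k i j)) ℝ)
    (hQij : ∀ i j, (Qij i j)ᵀ * Qij i j = 1) (hQij' : ∀ i j, Qij i j * (Qij i j)ᵀ = 1)
    (Rij : (i : Fin m) → (j : Fin (n i)) → Matrix (Fin q₂) (Fin q₂) ℝ)
    (hRijtri : ∀ i j, (Rij i j).BlockTriangular id)
    (hRij : ∀ i j, IsUnit (Rij i j).det)
    (hQRij : ∀ i j, B3 i j = Qij i j * Matrix.fromRows (Rij i j) 0)
    (Qi : (i : Fin m) → Matrix ((j : Fin (n i)) × Fin (k i j)) (Fin q₁ ⊕ Fin (s i)) ℝ)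
    (hQi : ∀ i, (Qi i)ᵀ * Qi i = 1) (hQi' : ∀ i, Qi i * (Qi i)ᵀ = 1)
    (Ri : (i : Fin m) → Matrix (Fin q₁) (Fin q₁) ℝ)
    (hRitri : ∀ i, (Ri i).BlockTriangular id)
    (hRi : ∀ i, IsUnit (Ri i).det)
    (hQRi : ∀ i, stackD2 Qij B2 i = Qi i * Matrix.fromRows (Ri i) 0)
    (Q : Matrix ((i : Fin m) × Fin (s i)) (Fin p ⊕ Fin t) ℝ)
    (hQ : Qᵀ * Q = 1) (hQ' : Q * Qᵀ = 1)
    (R : Matrix (Fin p) (Fin p) ℝ)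
    (hRtri : R.BlockTriangular id) (hR : IsUnit R.det)
    (hQR : stackC2 Qi Qij B1 = Q * Matrix.fromRows R 0)
    :
    ((threeLevelB B1 B2 B3)ᵀ * threeLevelB B1 B2 B3).det =
      ((∏ a, R a a) * ∏ i, ((∏ a, Ri i a a) * ∏ j, ∏ a, Rij i j a a)) ^ 2 := by
  rw [key_eq B1 B2 B3 Qij hQij hQij' Rij hQRij Qi hQi hQi' Ri hQRi Q hQ hQ' R hQR]
  set N := bigN Qij B1 B2 Qi Ri Rij R with hN
  let e : (Fin p ⊕ (Σ i : Fin m, Fin q₁ ⊕ (Fin (n i) × Fin q₂))) ≃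
      (((i : Fin m) × ((j : Fin (n i)) × Fin q₂)) ⊕ (((i : Fin m) × Fin q₁) ⊕ Fin p)) :=
    { toFun := fun z => match z with
        | Sum.inl a => Sum.inr (Sum.inr a)
        | Sum.inr ⟨i, Sum.inl b⟩ => Sum.inr (Sum.inl ⟨i, b⟩)
        | Sum.inr ⟨i, Sum.inr (j, b)⟩ => Sum.inl ⟨i, j, b⟩
      invFun := fun r => match r with
        | Sum.inl ⟨i, j, b⟩ => Sum.inr ⟨i, Sum.inr (j, b)⟩
        | Sum.inr (Sum.inl ⟨i, b⟩) => Sum.inr ⟨i, Sum.inl b⟩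
        | Sum.inr (Sum.inr a) => Sum.inl a
      left_inv := by rintro (a | ⟨i, b | ⟨j, b⟩⟩) <;> rfl
      right_inv := by rintro (⟨i, j, b⟩ | (⟨i, b⟩ | a)) <;> rfl }
  set N' := N.submatrix e id with hN'
  have h1 : Nᵀ * N = N'ᵀ * N' := by
    ext x y
    simp only [mul_apply, transpose_apply, hN', Matrix.submatrix_apply, id_eq]
    exact (Equiv.sum_comp e fun r => N r x * N r y).symm
  have h2 : N'.det = (∏ a, R a a) * ∏ i, ((∏ a, Ri i a a) * ∏ j, ∏ a, Rij i j a a) := by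
    classical
    let b : (Fin p ⊕ (Σ i : Fin m, Fin q₁ ⊕ (Fin (n i) × Fin q₂))) → ℕ ×ₗ ℕ ×ₗ ℕ ×ₗ ℕ :=
      fun z => match z with
        | Sum.inl a => toLex (2, toLex (0, toLex (0, a.val)))
        | Sum.inr ⟨i, Sum.inl c⟩ => toLex (1, toLex (i.val, toLex (0, c.val)))
        | Sum.inr ⟨i, Sum.inr (j, c)⟩ => toLex (0, toLex (i.val, toLex (j.val, c.val)))
    have hinj : Function.Injective b := by
      rintro (a | ⟨i, c | ⟨j, c⟩⟩) (a' | ⟨i', c' | ⟨j', c'⟩⟩) h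
      · simp [b, Prod.ext_iff] at h
        exact congrArg Sum.inl (Fin.ext h)
      · simp [b, Prod.ext_iff] at h
      · simp [b, Prod.ext_iff] at h
      · simp [b, Prod.ext_iff] at h
      · simp [b, Prod.ext_iff] at h
        obtain ⟨hi, hc⟩ := h
        obtain rfl : i = i' := Fin.ext hi
        obtain rfl : c = c' := Fin.ext hc
        rfl
      · simp [b, Prod.ext_iff] at h
      · simp [b, Prod.ext_iff] at h
      · simp [b, Prod.ext_iff] at h
      · simp [b, Prod.ext_iff] at h
        obtain ⟨hi, hj, hc⟩ := h
        obtain rfl : i = i' := Fin.ext hi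
        obtain rfl : j = j' := Fin.ext hj
        obtain rfl : c = c' := Fin.ext hc
        rfl
    have htri : N'.BlockTriangular b := by
      rintro (a | ⟨i, c | ⟨j, c⟩⟩) (a' | ⟨i', c' | ⟨j', c'⟩⟩) h <;>
        rw [hN', hN] <;> simp only [b, Prod.Lex.lt_iff, Prod.mk.injEq] at h
      · have ha : (a' : ℕ) < a := by simp at h; omega
        exact hRtri (Fin.lt_def.mpr ha)
      · rfl
      · rfl
      · simp at h
      · by_cases hii : i = i'
        · subst hii
          have hc : (c' : ℕ) < c := by simp at h; omega
          show (if i = i then Ri i c c' else 0) = 0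
          rw [if_pos rfl]
          exact hRitri i (Fin.lt_def.mpr hc)
        · show (if i = i' then Ri i c c' else 0) = 0
          rw [if_neg hii]
      · rfl
      · simp at h
      · simp at h
      · by_cases hij : (⟨i, j⟩ : Σ i, Fin (n i)) = ⟨i', j'⟩
        · obtain ⟨rfl, hj2⟩ := Sigma.mk.inj_iff.mp hij
          obtain rfl : j = j' := eq_of_heq hj2
          have hc : (c' : ℕ) < c := by simp at h; omega
          show (if (⟨i, j⟩ : Σ i, Fin (n i)) = ⟨i, j⟩ then Rij i j c c' else 0) = 0
          rw [if_pos rfl]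
          exact hRijtri i j (Fin.lt_def.mpr hc)
        · show (if (⟨i, j⟩ : Σ i, Fin (n i)) = ⟨i', j'⟩ then Rij i j c c' else 0) = 0
          rw [if_neg hij]
    rw [det_blockTri_inj N' b hinj htri, hN', hN, Fintype.prod_sum_type]
    refine congrArg₂ (· * ·) (Finset.prod_congr rfl fun a _ => rfl) ?_
    · rw [← Finset.univ_sigma_univ, Finset.prod_sigma]
      refine Finset.prod_congr rfl fun i _ => ?_
      rw [Fintype.prod_sum_type]
      congr 1
      · refine Finset.prod_congr rfl fun c _ => ?_
        show (if i = i then Ri i c c else 0) = Ri i c c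
        rw [if_pos rfl]
      · rw [Fintype.prod_prod_type]
        refine Finset.prod_congr rfl fun j _ => Finset.prod_congr rfl fun c _ => ?_
        show (if (⟨i, j⟩ : Σ i, Fin (n i)) = ⟨i, j⟩ then Rij i j c c else 0) = Rij i j c c
        rw [if_pos rfl]
  rw [h1, Matrix.det_mul, Matrix.det_transpose, h2, sq]
end
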